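/- arXiv:1409.4752 — 4 statements merged into one kernel-verified Lean document; each statement's English description precedes it below -/
import Mathlib

section
/- Let V = {V(·|·,s)}_{s∈S} and V* = {V*(·|·,s*)}_{s*∈S*} be two AVCs from a finite input alphabet X to a finite output alphabet Z with finite state sets S and S*, and suppose D(V,V*) ≤ ε for some ε ∈ (0,1). Let n ∈ ℕ, let J be a finite message set with uniform distribution, and let E(xⁿ|j) be a stochastic encoder; for a state sequence sⁿ let P_{sⁿ}(j,zⁿ) = (1/|J|)·∑_{xⁿ} ∏_{i=1}^n V(z_i|x_i,s_i) · E(xⁿ|j), and analogously P*_{s*ⁿ} for V*. If max_{sⁿ∈Sⁿ} (1/n)·I(J;Zⁿ‖P_{sⁿ}) = δ_n, then max_{s*ⁿ∈S*ⁿ} (1/n)·I(J;Zⁿ‖P*_{s*ⁿ}) ≤ δ_n + 4ε·log|Z| + 4H₂(ε). -/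
open Real Finset

/-- Binary entropy function (base 2). -/
noncomputable def H2 (ε : ℝ) : ℝ :=
  -(ε * Real.logb 2 ε) - (1 - ε) * Real.logb 2 (1 - ε)

/-- `p` is a probability distribution on the finite alphabet `α`. -/
def IsProb {α : Type*} [Fintype α] (p : α → ℝ) : Prop :=
  (∀ a, 0 ≤ p a) ∧ ∑ a, p a = 1

/-- `W` is a channel (stochastic matrix) from `X` to `Y`. -/
def IsChannel {X Y : Type*} [Fintype Y] (W : X → Y → ℝ) : Prop :=
  ∀ x, (∀ y, 0 ≤ W x y) ∧ ∑ y, W x y = 1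

/-- Conditional entropy `H(Y|X‖P)` (base 2) of a joint distribution `P` on `X × Y`. -/
noncomputable def condEnt {X Y : Type*} [Fintype X] [Fintype Y] (P : X × Y → ℝ) : ℝ :=
  -∑ x : X, ∑ y : Y, P (x, y) * Real.logb 2 (P (x, y) / ∑ y' : Y, P (x, y'))

/-- Mutual information `I(U;Y‖P)` (base 2) of a joint distribution `P` on `U × Y`. -/
noncomputable def mutInf {U Y : Type*} [Fintype U] [Fintype Y] (P : U × Y → ℝ) : ℝ :=
  ∑ u : U, ∑ y : Y,
    P (u, y) * Real.logb 2 (P (u, y) / ((∑ y' : Y, P (u, y')) * ∑ u' : U, P (u', y)))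

/-- Channel distance `d(W,W') = max_x ∑_y |W(y|x) − W'(y|x)|`. -/
noncomputable def dChan {X Y : Type*} [Fintype Y] (W W' : X → Y → ℝ) : ℝ :=
  ⨆ x : X, ∑ y : Y, |W x y - W' x y|

/-- Distance `D(W₁,W₂)` between two AVCs (families of channels). -/
noncomputable def Davc {X Y : Type*} [Fintype Y] {S₁ S₂ : Type*}
    (W₁ : S₁ → X → Y → ℝ) (W₂ : S₂ → X → Y → ℝ) : ℝ :=
  max (⨆ s₂ : S₂, ⨅ s₁ : S₁, dChan (W₁ s₁) (W₂ s₂))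
      (⨆ s₁ : S₁, ⨅ s₂ : S₂, dChan (W₁ s₁) (W₂ s₂))

/-- The symmetrizability gap function
`F(σ,σ',W) = ∑_{x₁,x₂,y} |∑_s W(y|x₁,s)σ(s|x₂) − ∑_s W(y|x₂,s)σ'(s|x₁)|`. -/
noncomputable def Fsym {X Y S : Type*} [Fintype X] [Fintype Y] [Fintype S]
    (σ σ' : X → S → ℝ) (W : S → X → Y → ℝ) : ℝ :=
  ∑ x₁ : X, ∑ x₂ : X, ∑ y : Y,
    |(∑ s : S, W s x₁ y * σ x₂ s) - ∑ s : S, W s x₂ y * σ' x₁ s|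

/-- Joint distribution of a uniformly distributed message `J` and the eavesdropper output
`Zⁿ` for state sequence `sⁿ`, under the stochastic encoder `E`. -/
noncomputable def jointAVC {X Z S J : Type*} [Fintype X] [Fintype J] (n : ℕ)
    (V : S → X → Z → ℝ) (sn : Fin n → S) (E : J → (Fin n → X) → ℝ) :
    J × (Fin n → Z) → ℝ :=
  fun p => ((Fintype.card J : ℝ))⁻¹ *
    ∑ xn : Fin n → X, (∏ i : Fin n, V (sn i) (xn i) (p.2 i)) * E p.1 xn


noncomputable def ent2 (x : ℝ) : ℝ := -(x * Real.logb 2 x)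

lemma one_lt_two' : (1:ℝ) < 2 := by norm_num

lemma ent2_zero : ent2 0 = 0 := by simp [ent2]
lemma ent2_one : ent2 1 = 0 := by simp [ent2]

lemma ent2_nonneg {x : ℝ} (h0 : 0 ≤ x) (h1 : x ≤ 1) : 0 ≤ ent2 x := by
  have : Real.logb 2 x ≤ 0 := Real.logb_nonpos one_lt_two' h0 h1
  have := mul_nonpos_of_nonneg_of_nonpos h0 this
  simp only [ent2]; linarith

lemma logb_two_pos : (0:ℝ) < Real.log 2 := Real.log_pos (by norm_num)

lemma ent2_add_le {x d : ℝ} (hx : 0 ≤ x) (hd : 0 ≤ d) :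
    ent2 (x + d) ≤ ent2 x + ent2 d := by
  rcases eq_or_lt_of_le hx with h | hx'
  · simp [← h, ent2_zero]
  rcases eq_or_lt_of_le hd with h | hd'
  · simp [← h, ent2_zero]
  have hxd : 0 < x + d := by linarith
  have h1 : Real.logb 2 x ≤ Real.logb 2 (x + d) :=
    Real.logb_le_logb_of_le one_lt_two' hx' (by linarith)
  have h2 : Real.logb 2 d ≤ Real.logb 2 (x + d) :=
    Real.logb_le_logb_of_le one_lt_two' hd' (by linarith)
  have := mul_le_mul_of_nonneg_left h1 hx
  have := mul_le_mul_of_nonneg_left h2 hd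
  simp only [ent2]
  nlinarith

lemma ent2_sub_le {x d : ℝ} (hx : 0 ≤ x) (hd : 0 ≤ d) :
    ent2 x - ent2 (x + d) ≤ d / Real.log 2 + d * Real.logb 2 (x + d) := by
  rcases eq_or_lt_of_le hx with h | hx'
  · simp [← h, ent2_zero, ent2]
    have : 0 ≤ d / Real.log 2 := div_nonneg hd logb_two_pos.le
    linarith
  rcases eq_or_lt_of_le hd with h | hd'
  · simp [← h]
  have hxd : 0 < x + d := by linarith
  have key : ent2 x - ent2 (x + d) =
      x * (Real.logb 2 (x + d) - Real.logb 2 x) + d * Real.logb 2 (x + d) := by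
    simp only [ent2]; ring
  rw [key]
  have h3 : Real.logb 2 (x + d) - Real.logb 2 x = Real.logb 2 ((x + d) / x) := by
    rw [Real.logb_div (by linarith) (by linarith)]
  have h4 : x * Real.log ((x + d) / x) ≤ d := by
    have heq : (x + d) / x - 1 = d / x := by field_simp; ring
    have := Real.log_le_sub_one_of_pos (show (0:ℝ) < (x+d)/x by positivity)
    rw [heq] at this
    have := mul_le_mul_of_nonneg_left this hx
    calc x * Real.log ((x+d)/x) ≤ x * (d / x) := by nlinarith
    _ = d := by field_simp
  have h5 : x * Real.logb 2 ((x + d) / x) ≤ d / Real.log 2 := by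
    rw [Real.logb]
    rw [mul_div_assoc']
    exact div_le_div_of_nonneg_right h4 logb_two_pos.le
  rw [h3]
  linarith


lemma abs_ent2_sub_le {a b : ℝ} (ha : 0 ≤ a) (hb : 0 ≤ b) (ha1 : a ≤ 1) (hb1 : b ≤ 1) :
    |ent2 a - ent2 b| ≤ ent2 |a - b| + |a - b| / Real.log 2 := by
  wlog hab : a ≤ b generalizing a b
  · have := this hb ha hb1 ha1 (by linarith)
    rw [abs_sub_comm (ent2 b), abs_sub_comm b a] at this
    exact this
  have hd : 0 ≤ b - a := by linarith
  have habs : |a - b| = b - a := by rw [abs_sub_comm]; exact abs_of_nonneg hd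
  rw [habs]
  have e1 : ent2 b - ent2 a ≤ ent2 (b - a) := by
    have := ent2_add_le ha hd
    have hb' : a + (b - a) = b := by ring
    rw [hb'] at this
    have := ent2_nonneg ha ha1
    linarith [ent2_add_le ha hd, (by ring : a + (b-a) = b)]
  have e2 : ent2 a - ent2 b ≤ (b - a) / Real.log 2 := by
    have := ent2_sub_le ha hd
    have hb' : a + (b - a) = b := by ring
    rw [hb'] at this
    have hlb : Real.logb 2 b ≤ 0 := Real.logb_nonpos one_lt_two' hb hb1
    nlinarith
  have h1 : 0 ≤ ent2 (b - a) := ent2_nonneg hd (by linarith)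
  have h2 : 0 ≤ (b - a) / Real.log 2 := div_nonneg hd logb_two_pos.le
  rw [abs_le]
  constructor
  · linarith
  · linarith

-- log-sum style bound: ∑ ent2 γ_z ≤ D * logb |Z| + ent2 D
lemma sum_ent2_le {Z : Type*} [Fintype Z] (γ : Z → ℝ) (hγ : ∀ z, 0 ≤ γ z) :
    ∑ z, ent2 (γ z) ≤ (∑ z, γ z) * Real.logb 2 (Fintype.card Z) + ent2 (∑ z, γ z) := by
  set D := ∑ z, γ z with hD
  have hD0 : 0 ≤ D := Finset.sum_nonneg fun z _ => hγ z
  rcases eq_or_lt_of_le hD0 with h | hDpos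
  · -- all γ = 0
    have hz : ∀ z ∈ Finset.univ, γ z = 0 := by
      intro z _
      have := Finset.sum_eq_zero_iff_of_nonneg (fun z _ => hγ z) |>.mp h.symm
      exact this z (Finset.mem_univ z)
    rw [← h]
    rw [Finset.sum_congr rfl fun z hzm => by rw [hz z hzm, ent2_zero]]
    simp [ent2_zero]
  have hcard : 0 < Fintype.card Z := by
    rcases isEmpty_or_nonempty Z with hE | hN
    · exfalso; rw [hD, Finset.univ_eq_empty, Finset.sum_empty] at hDpos; linarith
    · exact Fintype.card_pos
  set c : ℝ := (Fintype.card Z : ℝ) with hc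
  have hcpos : (0:ℝ) < c := by rw [hc]; exact_mod_cast hcard
  set q : ℝ := D / c with hq
  have hqpos : 0 < q := by positivity
  -- per-z: ent2 (γ z) ≤ (q - γ z)/log 2 + γ z * logb 2 (1/q)
  have per : ∀ z, ent2 (γ z) ≤ (q - γ z)/Real.log 2 - γ z * Real.logb 2 q := by
    intro z
    rcases eq_or_lt_of_le (hγ z) with h | hpos
    · rw [← h, ent2_zero]
      simp only [mul_comm, zero_mul, mul_zero, sub_zero]
      positivity
    · -- ent2 γ = γ logb (1/γ) = γ logb (q/γ) - γ logb q ≤ γ((q/γ)-1)/log2 - γ logb q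
      have hlog : Real.log (q / γ z) ≤ q / γ z - 1 := Real.log_le_sub_one_of_pos (by positivity)
      have key : ent2 (γ z) = γ z * Real.logb 2 (q / γ z) - γ z * Real.logb 2 q := by
        rw [Real.logb_div (ne_of_gt hqpos) (ne_of_gt hpos)]
        simp only [ent2]; ring
      rw [key]
      have : γ z * Real.logb 2 (q / γ z) ≤ (q - γ z)/Real.log 2 := by
        rw [Real.logb, mul_div_assoc']
        apply div_le_div_of_nonneg_right _ logb_two_pos.le
        calc γ z * Real.log (q / γ z) ≤ γ z * (q / γ z - 1) :=
              mul_le_mul_of_nonneg_left hlog (hγ z)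
        _ = q - γ z := by field_simp
      linarith
  have sum_le := Finset.sum_le_sum (fun z (_ : z ∈ Finset.univ) => per z)
  have sums : ∑ z, ((q - γ z)/Real.log 2 - γ z * Real.logb 2 q)
      = (c * q - D)/Real.log 2 - D * Real.logb 2 q := by
    rw [Finset.sum_sub_distrib, ← Finset.sum_div, ← Finset.sum_mul,
       Finset.sum_sub_distrib, Finset.sum_const, Finset.card_univ, ← hD, nsmul_eq_mul, hc]
  have hcq : c * q = D := by rw [hq]; field_simp
  calc ∑ z, ent2 (γ z) ≤ (c * q - D)/Real.log 2 - D * Real.logb 2 q := by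
        rw [← sums]; exact sum_le
  _ = - (D * Real.logb 2 q) := by rw [hcq]; simp
  _ = D * Real.logb 2 c + ent2 D := by
        rw [hq, Real.logb_div (ne_of_gt hDpos) (ne_of_gt hcpos)]
        simp only [ent2]; ring


lemma H2_eq (ε : ℝ) : H2 ε = ent2 ε + ent2 (1 - ε) := by
  simp only [H2, ent2]; ring

lemma H2_nonneg {ε : ℝ} (h0 : 0 ≤ ε) (h1 : ε ≤ 1) : 0 ≤ H2 ε := by
  rw [H2_eq]
  have := ent2_nonneg h0 h1
  have := ent2_nonneg (by linarith : (0:ℝ) ≤ 1 - ε) (by linarith)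
  linarith

lemma inv_log_two_le : 1 / Real.log 2 ≤ 2 := by
  have h := Real.log_two_gt_d9
  rw [div_le_iff₀ logb_two_pos]
  nlinarith

lemma logb_le_neg_one {t : ℝ} (ht0 : 0 < t) (ht : t ≤ 1/2) : Real.logb 2 t ≤ -1 := by
  have h1 : Real.log t ≤ Real.log (1/2) := Real.log_le_log ht0 ht
  have h2 : Real.log (1/2) = - Real.log 2 := by
    rw [one_div, Real.log_inv]
  rw [Real.logb, div_le_iff₀ logb_two_pos]
  rw [h2] at h1
  linarith

lemma logb_ge_one {c : ℝ} (hc : 2 ≤ c) : 1 ≤ Real.logb 2 c := by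
  have := Real.logb_le_logb_of_le one_lt_two' (by norm_num : (0:ℝ) < 2) hc
  simpa using this

lemma ent2_ge {ε : ℝ} (hε0 : 0 < ε) (hε2 : ε ≤ 1/2) : ε ≤ ent2 ε := by
  have h := logb_le_neg_one hε0 hε2
  have := mul_le_mul_of_nonneg_left h hε0.le
  simp only [ent2]
  nlinarith

lemma gmono {c s t : ℝ} (hc : 2 ≤ c) (hs : 0 ≤ s) (hst : s ≤ t) (ht : t ≤ 1/2) :
    s * Real.logb 2 c + ent2 s ≤ t * Real.logb 2 c + ent2 t := by
  rcases eq_or_lt_of_le hst with h | hst'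
  · rw [h]
  have ht0 : 0 < t := by linarith
  have h1 : ent2 s - ent2 t ≤ (t - s) / Real.log 2 + (t - s) * Real.logb 2 t := by
    have := ent2_sub_le hs (by linarith : (0:ℝ) ≤ t - s)
    have he : s + (t - s) = t := by ring
    rw [he] at this
    exact this
  have h2 : Real.logb 2 t ≤ -1 := logb_le_neg_one ht0 ht
  have h3 : (t - s) / Real.log 2 ≤ 2 * (t - s) := by
    rw [div_eq_mul_inv, ← one_div]
    nlinarith [inv_log_two_le, div_nonneg (le_refl (0:ℝ)) (le_refl (0:ℝ)),
      one_div_pos.mpr logb_two_pos]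
  have h4 : 1 ≤ Real.logb 2 c := logb_ge_one hc
  nlinarith

lemma K_le {ε c : ℝ} (hε0 : 0 < ε) (hε2 : ε ≤ 1/2) (hc : 2 ≤ c) :
    ε * Real.logb 2 c + ent2 ε + ε / Real.log 2 ≤ 2*ε*Real.logb 2 c + 2*H2 ε := by
  have h1 : ent2 ε ≤ H2 ε := by
    rw [H2_eq]
    have := ent2_nonneg (by linarith : (0:ℝ) ≤ 1 - ε) (by linarith)
    linarith
  have h2 : ε ≤ ent2 ε := ent2_ge hε0 hε2
  have h3 : ε / Real.log 2 ≤ 2 * ε := by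
    rw [div_eq_mul_inv, ← one_div]
    nlinarith [inv_log_two_le, one_div_pos.mpr logb_two_pos]
  have h4 : 1 ≤ Real.logb 2 c := logb_ge_one hc
  nlinarith


lemma ent2_mul {a b : ℝ} (ha : 0 ≤ a) (hb : 0 ≤ b) :
    ent2 (a * b) = a * ent2 b + b * ent2 a := by
  rcases eq_or_lt_of_le ha with h | ha'
  · simp [← h, ent2_zero]
  rcases eq_or_lt_of_le hb with h | hb'
  · simp [← h, ent2_zero]
  simp only [ent2]
  rw [Real.logb_mul (ne_of_gt ha') (ne_of_gt hb')]
  ring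

lemma entropy_mix_close {Ω Y Z : Type*} [Fintype Ω] [Fintype Y] [Fintype Z]
    {ε : ℝ} (hε0 : 0 < ε) (hε2 : ε ≤ 1/2) (hZ : 2 ≤ Fintype.card Z)
    (μ : Ω → ℝ) (hμ0 : ∀ ω, 0 ≤ μ ω) (hμ1 : ∑ ω, μ ω = 1)
    (G : Ω → Y → ℝ) (hG : IsChannel G)
    (A B : Ω → Z → ℝ) (hA : IsChannel A) (hB : IsChannel B)
    (hAB : ∀ ω, ∑ z, |A ω z - B ω z| ≤ ε) :
    |(∑ y, ∑ z, ent2 (∑ ω, μ ω * G ω y * A ω z)) -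
      ∑ y, ∑ z, ent2 (∑ ω, μ ω * G ω y * B ω z)| ≤
      2 * ε * Real.logb 2 (Fintype.card Z) + 2 * H2 ε := by
  classical
  set c : ℝ := (Fintype.card Z : ℝ) with hc
  have hc2 : (2:ℝ) ≤ c := by rw [hc]; exact_mod_cast hZ
  set m : Y → ℝ := fun y => ∑ ω, μ ω * G ω y with hm
  set P : Y → Z → ℝ := fun y z => ∑ ω, μ ω * G ω y * A ω z with hP
  set Q : Y → Z → ℝ := fun y z => ∑ ω, μ ω * G ω y * B ω z with hQ
  have hm0 : ∀ y, 0 ≤ m y := fun y =>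
    Finset.sum_nonneg fun ω _ => mul_nonneg (hμ0 ω) ((hG ω).1 y)
  have hm1 : ∑ y, m y = 1 := by
    rw [hm]
    rw [Finset.sum_comm]
    calc ∑ ω, ∑ y, μ ω * G ω y = ∑ ω, μ ω * ∑ y, G ω y := by
          apply Finset.sum_congr rfl; intro ω _; rw [Finset.mul_sum]
    _ = 1 := by
        rw [← hμ1]; apply Finset.sum_congr rfl; intro ω _; rw [(hG ω).2, mul_one]
  have hP0 : ∀ y z, 0 ≤ P y z := fun y z =>
    Finset.sum_nonneg fun ω _ => mul_nonneg (mul_nonneg (hμ0 ω) ((hG ω).1 y)) ((hA ω).1 z)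
  have hQ0 : ∀ y z, 0 ≤ Q y z := fun y z =>
    Finset.sum_nonneg fun ω _ => mul_nonneg (mul_nonneg (hμ0 ω) ((hG ω).1 y)) ((hB ω).1 z)
  have hProw : ∀ y, ∑ z, P y z = m y := by
    intro y
    rw [hP, hm]
    simp only
    rw [Finset.sum_comm]
    apply Finset.sum_congr rfl; intro ω _
    rw [← Finset.mul_sum, (hA ω).2, mul_one]
  have hQrow : ∀ y, ∑ z, Q y z = m y := by
    intro y
    rw [hQ, hm]
    simp only
    rw [Finset.sum_comm]
    apply Finset.sum_congr rfl; intro ω _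
    rw [← Finset.mul_sum, (hB ω).2, mul_one]
  have hPle : ∀ y z, P y z ≤ m y := by
    intro y z
    rw [← hProw y]
    exact Finset.single_le_sum (fun z' _ => hP0 y z') (Finset.mem_univ z)
  have hQle : ∀ y z, Q y z ≤ m y := by
    intro y z
    rw [← hQrow y]
    exact Finset.single_le_sum (fun z' _ => hQ0 y z') (Finset.mem_univ z)
  have hdiff : ∀ y, ∑ z, |P y z - Q y z| ≤ ε * m y := by
    intro y
    have step1 : ∀ z, |P y z - Q y z| ≤ ∑ ω, μ ω * G ω y * |A ω z - B ω z| := by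
      intro z
      rw [hP, hQ]
      simp only
      rw [← Finset.sum_sub_distrib]
      refine (Finset.abs_sum_le_sum_abs _ _).trans ?_
      apply Finset.sum_le_sum
      intro ω _
      rw [← mul_sub, abs_mul, abs_of_nonneg (mul_nonneg (hμ0 ω) ((hG ω).1 y))]
    calc ∑ z, |P y z - Q y z| ≤ ∑ z, ∑ ω, μ ω * G ω y * |A ω z - B ω z| :=
          Finset.sum_le_sum fun z _ => step1 z
    _ = ∑ ω, μ ω * G ω y * ∑ z, |A ω z - B ω z| := by
        rw [Finset.sum_comm]
        apply Finset.sum_congr rfl; intro ω _; rw [Finset.mul_sum]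
    _ ≤ ∑ ω, μ ω * G ω y * ε := by
        apply Finset.sum_le_sum; intro ω _
        exact mul_le_mul_of_nonneg_left (hAB ω) (mul_nonneg (hμ0 ω) ((hG ω).1 y))
    _ = ε * m y := by rw [hm, ← Finset.sum_mul]; ring
  -- the key per-y bound
  set K0 : ℝ := ε * Real.logb 2 c + ent2 ε + ε / Real.log 2 with hK0
  have perY : ∀ y, |(∑ z, ent2 (P y z)) - ∑ z, ent2 (Q y z)| ≤ m y * K0 := by
    intro y
    rcases eq_or_lt_of_le (hm0 y) with hmy | hmy
    · -- m y = 0 :   P = Q = 0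
      have hPz : ∀ z, P y z = 0 := fun z =>
        le_antisymm ((hPle y z).trans (le_of_eq hmy.symm)) (hP0 y z)
      have hQz : ∀ z, Q y z = 0 := fun z =>
        le_antisymm ((hQle y z).trans (le_of_eq hmy.symm)) (hQ0 y z)
      have e1 : ∑ z, ent2 (P y z) = 0 := Finset.sum_eq_zero fun z _ => by rw [hPz z, ent2_zero]
      have e2 : ∑ z, ent2 (Q y z) = 0 := Finset.sum_eq_zero fun z _ => by rw [hQz z, ent2_zero]
      rw [e1, e2, ← hmy]
      simp
    · -- m y > 0, normalize
      set cy : Z → ℝ := fun z => P y z / m y with hcy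
      set cy' : Z → ℝ := fun z => Q y z / m y with hcy'
      have hcy0 : ∀ z, 0 ≤ cy z := fun z => div_nonneg (hP0 y z) (hm0 y)
      have hcy'0 : ∀ z, 0 ≤ cy' z := fun z => div_nonneg (hQ0 y z) (hm0 y)
      have hcy1 : ∀ z, cy z ≤ 1 := fun z => by
        rw [hcy]; exact (div_le_one hmy).mpr (hPle y z)
      have hcy'1 : ∀ z, cy' z ≤ 1 := fun z => by
        rw [hcy']; exact (div_le_one hmy).mpr (hQle y z)
      have hPmc : ∀ z, P y z = m y * cy z := fun z => by
        rw [hcy]; simp only; rw [mul_div_cancel₀ _ (ne_of_gt hmy)]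
      have hQmc : ∀ z, Q y z = m y * cy' z := fun z => by
        rw [hcy']; simp only; rw [mul_div_cancel₀ _ (ne_of_gt hmy)]
      set γ : Z → ℝ := fun z => |cy z - cy' z| with hγ
      have hγ0 : ∀ z, 0 ≤ γ z := fun z => abs_nonneg _
      have hγsum : ∑ z, γ z ≤ ε := by
        have : ∑ z, γ z = (∑ z, |P y z - Q y z|) / m y := by
          rw [Finset.sum_div]
          apply Finset.sum_congr rfl; intro z _
          rw [hγ, hcy, hcy']
          simp only
          rw [div_sub_div_same, abs_div, abs_of_pos hmy]
        rw [this, div_le_iff₀ hmy]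
        calc ∑ z, |P y z - Q y z| ≤ ε * m y := hdiff y
        _ = ε * m y := rfl
      -- entropy scaling
      have hscale : ∀ (R : Z → ℝ), (∀ z, 0 ≤ R z) →
          ∑ z, ent2 (m y * R z) = m y * (∑ z, ent2 (R z)) + (∑ z, R z) * ent2 (m y) := by
        intro R hR
        rw [Finset.mul_sum, Finset.sum_mul]
        rw [← Finset.sum_add_distrib]
        apply Finset.sum_congr rfl; intro z _
        rw [ent2_mul (hm0 y) (hR z)]
      have hcysum : ∑ z, cy z = 1 := by
        have : ∑ z, cy z = (∑ z, P y z) / m y := by rw [Finset.sum_div]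
        rw [this, hProw y, div_self (ne_of_gt hmy)]
      have hcy'sum : ∑ z, cy' z = 1 := by
        have : ∑ z, cy' z = (∑ z, Q y z) / m y := by rw [Finset.sum_div]
        rw [this, hQrow y, div_self (ne_of_gt hmy)]
      have eP : ∑ z, ent2 (P y z) = m y * (∑ z, ent2 (cy z)) + ent2 (m y) := by
        rw [Finset.sum_congr rfl fun z _ => by rw [hPmc z], hscale cy hcy0, hcysum, one_mul]
      have eQ : ∑ z, ent2 (Q y z) = m y * (∑ z, ent2 (cy' z)) + ent2 (m y) := by
        rw [Finset.sum_congr rfl fun z _ => by rw [hQmc z], hscale cy' hcy'0, hcy'sum, one_mul]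
      rw [eP, eQ]
      have inner : |(∑ z, ent2 (cy z)) - ∑ z, ent2 (cy' z)| ≤ K0 := by
        have step1 : |(∑ z, ent2 (cy z)) - ∑ z, ent2 (cy' z)| ≤
            ∑ z, (ent2 (γ z) + γ z / Real.log 2) := by
          rw [← Finset.sum_sub_distrib]
          refine (Finset.abs_sum_le_sum_abs _ _).trans ?_
          apply Finset.sum_le_sum; intro z _
          exact abs_ent2_sub_le (hcy0 z) (hcy'0 z) (hcy1 z) (hcy'1 z)
        have step2 : ∑ z, (ent2 (γ z) + γ z / Real.log 2) =
            (∑ z, ent2 (γ z)) + (∑ z, γ z) / Real.log 2 := by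
          rw [Finset.sum_add_distrib, Finset.sum_div]
        have step3 : (∑ z, ent2 (γ z)) ≤ (∑ z, γ z) * Real.logb 2 c + ent2 (∑ z, γ z) :=
          sum_ent2_le γ hγ0
        have step4 : (∑ z, γ z) * Real.logb 2 c + ent2 (∑ z, γ z) ≤
            ε * Real.logb 2 c + ent2 ε :=
          gmono hc2 (Finset.sum_nonneg fun z _ => hγ0 z) hγsum hε2
        have step5 : (∑ z, γ z) / Real.log 2 ≤ ε / Real.log 2 :=
          div_le_div_of_nonneg_right hγsum logb_two_pos.le
        rw [hK0]
        calc |(∑ z, ent2 (cy z)) - ∑ z, ent2 (cy' z)| ≤ _ := step1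
        _ = _ := step2
        _ ≤ ε * Real.logb 2 c + ent2 ε + ε / Real.log 2 := by linarith
      have habs : |m y * ((∑ z, ent2 (cy z)) - ∑ z, ent2 (cy' z))| ≤ m y * K0 := by
        rw [abs_mul, abs_of_pos hmy]
        exact mul_le_mul_of_nonneg_left inner (hm0 y)
      calc |m y * (∑ z, ent2 (cy z)) + ent2 (m y) -
            (m y * (∑ z, ent2 (cy' z)) + ent2 (m y))|
          = |m y * ((∑ z, ent2 (cy z)) - ∑ z, ent2 (cy' z))| := by congr 1; ring
      _ ≤ m y * K0 := habs
  -- conclude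
  have total : |(∑ y, ∑ z, ent2 (P y z)) - ∑ y, ∑ z, ent2 (Q y z)| ≤ K0 := by
    rw [← Finset.sum_sub_distrib]
    refine (Finset.abs_sum_le_sum_abs _ _).trans ?_
    calc ∑ y, |(∑ z, ent2 (P y z)) - ∑ z, ent2 (Q y z)| ≤ ∑ y, m y * K0 :=
          Finset.sum_le_sum fun y _ => perY y
    _ = K0 := by rw [← Finset.sum_mul, hm1, one_mul]
  exact total.trans (K_le hε0 hε2 hc2)


lemma mutInf_eq_ent {U Y : Type*} [Fintype U] [Fintype Y] (P : U × Y → ℝ)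
    (hP : ∀ p, 0 ≤ P p) :
    mutInf P = (∑ u, ent2 (∑ y, P (u, y))) + (∑ y, ent2 (∑ u, P (u, y)))
      - ∑ u, ∑ y, ent2 (P (u, y)) := by
  classical
  set a : U → ℝ := fun u => ∑ y, P (u, y) with ha
  set b : Y → ℝ := fun y => ∑ u, P (u, y) with hb
  have key : ∀ u y, P (u, y) * Real.logb 2 (P (u, y) /
      ((∑ y' : Y, P (u, y')) * ∑ u' : U, P (u', y))) =
      (- ent2 (P (u,y))) + (-(P (u,y) * Real.logb 2 (a u)))
        + (-(P (u,y) * Real.logb 2 (b y))) := by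
    intro u y
    rcases eq_or_lt_of_le (hP (u, y)) with h | hpos
    · rw [← h]; simp [ent2_zero]
    · have hau : 0 < a u :=
        lt_of_lt_of_le hpos (Finset.single_le_sum (fun y' _ => hP (u, y')) (Finset.mem_univ y))
      have hbv : 0 < b y :=
        lt_of_lt_of_le hpos (Finset.single_le_sum (fun u' _ => hP (u', y)) (Finset.mem_univ u))
      have : (∑ y' : Y, P (u, y')) = a u := rfl
      rw [this]
      have : (∑ u' : U, P (u', y)) = b y := rfl
      rw [this]
      rw [Real.logb_div (ne_of_gt hpos) (by positivity),
          Real.logb_mul (ne_of_gt hau) (ne_of_gt hbv)]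
      simp only [ent2]; ring
  rw [mutInf]
  rw [Finset.sum_congr rfl fun u _ => Finset.sum_congr rfl fun y _ => key u y]
  simp only [Finset.sum_add_distrib]
  have s1 : ∑ u, ∑ y, (- ent2 (P (u,y))) = - ∑ u, ∑ y, ent2 (P (u,y)) := by
    simp [Finset.sum_neg_distrib]
  have s2 : ∑ u, ∑ y, (-(P (u,y) * Real.logb 2 (a u))) = ∑ u, ent2 (a u) := by
    apply Finset.sum_congr rfl; intro u _
    rw [Finset.sum_neg_distrib, ← Finset.sum_mul]
    have : (∑ y, P (u, y)) = a u := rfl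
    rw [this]
    rfl
  have s3 : ∑ u, ∑ y, (-(P (u,y) * Real.logb 2 (b y))) = ∑ y, ent2 (b y) := by
    rw [Finset.sum_comm]
    apply Finset.sum_congr rfl; intro y _
    rw [Finset.sum_neg_distrib, ← Finset.sum_mul]
    have : (∑ u, P (u, y)) = b y := rfl
    rw [this]
    rfl
  rw [s1, s2, s3]
  ring

lemma mutInf_nonneg {U Y : Type*} [Fintype U] [Fintype Y] (P : U × Y → ℝ)
    (hP : ∀ p, 0 ≤ P p) (hsum : ∑ u, ∑ y, P (u, y) = 1) :
    0 ≤ mutInf P := by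
  classical
  set a : U → ℝ := fun u => ∑ y, P (u, y) with ha
  set b : Y → ℝ := fun y => ∑ u, P (u, y) with hb
  have key : ∀ u y, (P (u,y) - a u * b y) / Real.log 2 ≤
      P (u, y) * Real.logb 2 (P (u, y) / ((∑ y' : Y, P (u, y')) * ∑ u' : U, P (u', y))) := by
    intro u y
    have hab0 : 0 ≤ a u * b y := by
      apply mul_nonneg <;> exact Finset.sum_nonneg fun _ _ => hP _
    rcases eq_or_lt_of_le (hP (u, y)) with h | hpos
    · rw [← h]
      simp only [zero_mul, zero_sub]
      rw [div_le_iff₀ logb_two_pos]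
      nlinarith
    · have hau : 0 < a u :=
        lt_of_lt_of_le hpos (Finset.single_le_sum (fun y' _ => hP (u, y')) (Finset.mem_univ y))
      have hbv : 0 < b y :=
        lt_of_lt_of_le hpos (Finset.single_le_sum (fun u' _ => hP (u', y)) (Finset.mem_univ u))
      have e1 : (∑ y' : Y, P (u, y')) = a u := rfl
      have e2 : (∑ u' : U, P (u', y)) = b y := rfl
      rw [e1, e2]
      have habpos : 0 < a u * b y := mul_pos hau hbv
      have hlog : Real.log (a u * b y / P (u,y)) ≤ a u * b y / P (u,y) - 1 :=
        Real.log_le_sub_one_of_pos (by positivity)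
      have hlogswap : Real.log (P (u,y) / (a u * b y)) = - Real.log (a u * b y / P (u,y)) := by
        rw [← Real.log_inv]
        congr 1
        field_simp
      rw [Real.logb, hlogswap]
      have := mul_le_mul_of_nonneg_left hlog (hP (u,y))
      have hexp : P (u,y) * (a u * b y / P (u,y) - 1) = a u * b y - P (u,y) := by
        field_simp
      rw [hexp] at this
      have h2 : P (u,y) - a u * b y ≤ P (u,y) * (- Real.log (a u * b y / P (u,y))) := by nlinarith
      calc (P (u,y) - a u * b y) / Real.log 2
          ≤ P (u,y) * (- Real.log (a u * b y / P (u,y))) / Real.log 2 :=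
            div_le_div_of_nonneg_right h2 logb_two_pos.le
      _ = P (u,y) * (- Real.log (a u * b y / P (u,y)) / Real.log 2) := by ring
  have sum_ab : ∑ u, ∑ y, a u * b y = 1 := by
    have hsa : ∑ u, a u = 1 := by rw [ha]; exact hsum
    have hsb : ∑ y, b y = 1 := by rw [hb, Finset.sum_comm]; exact hsum
    calc ∑ u, ∑ y, a u * b y = ∑ u, a u * ∑ y, b y := by
          apply Finset.sum_congr rfl; intro u _; rw [Finset.mul_sum]
    _ = 1 := by rw [hsb]; simp [hsa]
  have lower : (∑ u, ∑ y, (P (u,y) - a u * b y)) / Real.log 2 ≤ mutInf P := by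
    rw [Finset.sum_div]
    apply Finset.sum_le_sum
    intro u _
    rw [Finset.sum_div]
    exact Finset.sum_le_sum fun y _ => key u y
  have : ∑ u, ∑ y, (P (u,y) - a u * b y) = 0 := by
    rw [Finset.sum_congr rfl fun u (_ : u ∈ Finset.univ) => Finset.sum_sub_distrib _ _]
    rw [Finset.sum_sub_distrib, hsum, sum_ab, sub_self]
  rw [this] at lower
  simpa using lower

-- entropy of a (sub)probability vector is ≤ log of alphabet size
lemma sum_ent2_le_logb {Z : Type*} [Fintype Z] (p : Z → ℝ) (hp : ∀ z, 0 ≤ p z)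
    (hsum : ∑ z, p z = 1) :
    ∑ z, ent2 (p z) ≤ Real.logb 2 (Fintype.card Z) := by
  have := sum_ent2_le p hp
  rw [hsum, one_mul, ent2_one, add_zero] at this
  exact this

-- joint entropy at least entropy of a marginal
lemma margU_ent_le {U Y : Type*} [Fintype U] [Fintype Y] (P : U × Y → ℝ)
    (hP : ∀ p, 0 ≤ P p) :
    ∑ u, ent2 (∑ y, P (u, y)) ≤ ∑ u, ∑ y, ent2 (P (u, y)) := by
  apply Finset.sum_le_sum
  intro u _
  set au := ∑ y, P (u, y) with hau
  have hau0 : 0 ≤ au := Finset.sum_nonneg fun _ _ => hP _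
  have per : ∀ y, P (u,y) * Real.logb 2 au ≤ P (u,y) * Real.logb 2 (P (u,y)) →
      True := fun _ _ => trivial
  have : ent2 au = ∑ y, (-(P (u,y) * Real.logb 2 au)) := by
    rw [Finset.sum_neg_distrib, ← Finset.sum_mul, ← hau]; rfl
  rw [this]
  apply Finset.sum_le_sum
  intro y _
  simp only [ent2]
  rcases eq_or_lt_of_le (hP (u, y)) with h | hpos
  · rw [← h]; simp
  · have hle : P (u,y) ≤ au :=
      Finset.single_le_sum (fun y' _ => hP (u, y')) (Finset.mem_univ y)
    have : Real.logb 2 (P (u,y)) ≤ Real.logb 2 au :=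
      Real.logb_le_logb_of_le one_lt_two' hpos hle
    nlinarith


lemma sum_prod_fun {ι Z : Type*} [Fintype ι] [Fintype Z] [DecidableEq ι]
    (f : ι → Z → ℝ) : ∑ g : ι → Z, ∏ i, f i (g i) = ∏ i, ∑ z, f i z := by
  rw [Finset.prod_univ_sum]
  rw [Fintype.piFinset_univ]

-- splitting a product over `Fin n` at one coordinate
lemma prod_split {n : ℕ} (k0 : Fin n) (h : Fin n → ℝ) :
    ∏ i, h i = h k0 * ∏ j : {j : Fin n // j ≠ k0}, h j.1 := by
  rw [Fintype.prod_eq_mul_prod_compl k0]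
  congr 1
  exact (Finset.prod_subtype ({k0}ᶜ) (fun x => by simp) h)

lemma hent_close {T X Z : Type*} [Fintype T] [Fintype X] [Fintype Z] [DecidableEq T] {n : ℕ}
    (k0 : Fin n) {ε : ℝ} (hε0 : 0 < ε) (hε2 : ε ≤ 1/2) (hZ : 2 ≤ Fintype.card Z)
    {Ω : Type*} [Fintype Ω]
    (μ : Ω → ℝ) (hμ0 : ∀ ω, 0 ≤ μ ω) (hμ1 : ∑ ω, μ ω = 1)
    (τ : Ω → T) (χ : Ω → Fin n → X)
    (C D : Fin n → X → Z → ℝ) (hC : ∀ i, IsChannel (C i)) (hD : ∀ i, IsChannel (D i))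
    (hCD : ∀ i, i ≠ k0 → C i = D i)
    (hk : ∀ x, ∑ z, |C k0 x z - D k0 x z| ≤ ε) :
    |(∑ t : T, ∑ zn : Fin n → Z, ent2 (∑ ω, (if τ ω = t then μ ω else 0) * ∏ i, C i (χ ω i) (zn i))) -
     (∑ t : T, ∑ zn : Fin n → Z, ent2 (∑ ω, (if τ ω = t then μ ω else 0) * ∏ i, D i (χ ω i) (zn i)))| ≤
      2 * ε * Real.logb 2 (Fintype.card Z) + 2 * H2 ε := by
  classical
  set Y := T × ({j : Fin n // j ≠ k0} → Z) with hY
  set G : Ω → Y → ℝ :=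
    fun ω ty => (if τ ω = ty.1 then 1 else 0) * ∏ j : {j : Fin n // j ≠ k0}, C j.1 (χ ω j.1) (ty.2 j)
    with hG
  set A : Ω → Z → ℝ := fun ω z => C k0 (χ ω k0) z with hA
  set B : Ω → Z → ℝ := fun ω z => D k0 (χ ω k0) z with hB
  have hGchan : IsChannel G := by
    intro ω
    constructor
    · rintro ⟨t, y⟩
      apply mul_nonneg
      · split <;> norm_num
      · exact Finset.prod_nonneg fun j _ => (hC j.1 (χ ω j.1)).1 (y j)
    · rw [Fintype.sum_prod_type]
      have : ∀ t : T, ∑ y : {j : Fin n // j ≠ k0} → Z,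
          (if τ ω = t then (1:ℝ) else 0) * ∏ j : {j : Fin n // j ≠ k0}, C j.1 (χ ω j.1) (y j)
          = (if τ ω = t then (1:ℝ) else 0) := by
        intro t
        rw [← Finset.mul_sum, sum_prod_fun]
        have : ∏ j : {j : Fin n // j ≠ k0}, ∑ z, C j.1 (χ ω j.1) z = 1 :=
          Finset.prod_eq_one fun j _ => (hC j.1 (χ ω j.1)).2
        rw [this, mul_one]
      rw [Finset.sum_congr rfl fun t _ => this t]
      simp
  have hAchan : IsChannel A := fun ω => (hC k0 (χ ω k0))
  have hBchan : IsChannel B := fun ω => (hD k0 (χ ω k0))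
  have hABd : ∀ ω, ∑ z, |A ω z - B ω z| ≤ ε := fun ω => hk (χ ω k0)
  have main := entropy_mix_close (Y := Y) hε0 hε2 hZ μ hμ0 hμ1 G hGchan A B hAchan hBchan hABd
  -- transport sums
  have transC : (∑ t : T, ∑ zn : Fin n → Z,
      ent2 (∑ ω, (if τ ω = t then μ ω else 0) * ∏ i, C i (χ ω i) (zn i)))
      = ∑ y : Y, ∑ z : Z, ent2 (∑ ω, μ ω * G ω y * A ω z) := by
    rw [Fintype.sum_prod_type]
    apply Finset.sum_congr rfl; intro t _
    -- reindex (Fin n → Z) by Z × ({j ≠ k0} → Z)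
    rw [← (Equiv.piSplitAt k0 (fun _ => Z)).symm.sum_comp
        (fun zn => ent2 (∑ ω, (if τ ω = t then μ ω else 0) * ∏ i, C i (χ ω i) (zn i)))]
    rw [Fintype.sum_prod_type, Finset.sum_comm]
    apply Finset.sum_congr rfl; intro y _
    apply Finset.sum_congr rfl; intro z _
    congr 1
    apply Finset.sum_congr rfl; intro ω _
    have hsplit : ∀ zn : Fin n → Z, ∏ i, C i (χ ω i) (zn i)
        = C k0 (χ ω k0) (zn k0) * ∏ j : {j : Fin n // j ≠ k0}, C j.1 (χ ω j.1) (zn j.1) :=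
      fun zn => prod_split k0 _
    rw [hsplit]
    have h1 : ((Equiv.piSplitAt k0 (fun _ => Z)).symm (z, y)) k0 = z := by
      simp [Equiv.piSplitAt]
    have h2 : ∀ j : {j : Fin n // j ≠ k0},
        ((Equiv.piSplitAt k0 (fun _ => Z)).symm (z, y)) j.1 = y j := by
      intro j
      simp [Equiv.piSplitAt, dif_neg j.2]
    rw [h1]
    rw [Finset.prod_congr rfl fun j _ => by rw [h2 j]]
    have hind : (if τ ω = t then μ ω else 0) = μ ω * (if τ ω = t then 1 else 0) := by
      split <;> ring
    rw [hind]
    simp only [hG, hA]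
    ring
  have transD : (∑ t : T, ∑ zn : Fin n → Z,
      ent2 (∑ ω, (if τ ω = t then μ ω else 0) * ∏ i, D i (χ ω i) (zn i)))
      = ∑ y : Y, ∑ z : Z, ent2 (∑ ω, μ ω * G ω y * B ω z) := by
    rw [Fintype.sum_prod_type]
    apply Finset.sum_congr rfl; intro t _
    rw [← (Equiv.piSplitAt k0 (fun _ => Z)).symm.sum_comp
        (fun zn => ent2 (∑ ω, (if τ ω = t then μ ω else 0) * ∏ i, D i (χ ω i) (zn i)))]
    rw [Fintype.sum_prod_type, Finset.sum_comm]
    apply Finset.sum_congr rfl; intro y _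
    apply Finset.sum_congr rfl; intro z _
    congr 1
    apply Finset.sum_congr rfl; intro ω _
    have hsplit : ∀ zn : Fin n → Z, ∏ i, D i (χ ω i) (zn i)
        = D k0 (χ ω k0) (zn k0) * ∏ j : {j : Fin n // j ≠ k0}, D j.1 (χ ω j.1) (zn j.1) :=
      fun zn => prod_split k0 _
    rw [hsplit]
    have h1 : ((Equiv.piSplitAt k0 (fun _ => Z)).symm (z, y)) k0 = z := by
      simp [Equiv.piSplitAt]
    have h2 : ∀ j : {j : Fin n // j ≠ k0},
        ((Equiv.piSplitAt k0 (fun _ => Z)).symm (z, y)) j.1 = y j := by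
      intro j
      simp [Equiv.piSplitAt, dif_neg j.2]
    rw [h1]
    rw [Finset.prod_congr rfl fun j _ => by rw [h2 j]]
    have hDC : ∀ j : {j : Fin n // j ≠ k0}, D j.1 = C j.1 := fun j => (hCD j.1 j.2).symm
    rw [Finset.prod_congr rfl fun j _ => by rw [hDC j]]
    have hind : (if τ ω = t then μ ω else 0) = μ ω * (if τ ω = t then 1 else 0) := by
      split <;> ring
    rw [hind]
    simp only [hG, hB]
    ring
  rw [transC, transD]
  exact main


noncomputable def jointGen {X Z J : Type*} [Fintype X] [Fintype J] (n : ℕ)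
    (C : Fin n → X → Z → ℝ) (E : J → (Fin n → X) → ℝ) : J × (Fin n → Z) → ℝ :=
  fun p => ((Fintype.card J : ℝ))⁻¹ *
    ∑ xn : Fin n → X, (∏ i : Fin n, C i (xn i) (p.2 i)) * E p.1 xn

section jointGenFacts
variable {X Z J : Type*} [Fintype X] [Fintype Z] [Fintype J] [Nonempty J] {n : ℕ}
  (C : Fin n → X → Z → ℝ) (E : J → (Fin n → X) → ℝ)

lemma cardJ_pos : (0:ℝ) < (Fintype.card J : ℝ) := by
  exact_mod_cast Fintype.card_pos

lemma jointGen_nonneg (hC : ∀ i, IsChannel (C i))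
    (hE : ∀ j, (∀ xn, 0 ≤ E j xn) ∧ ∑ xn : Fin n → X, E j xn = 1) :
    ∀ p, 0 ≤ jointGen n C E p := by
  intro p
  apply mul_nonneg (by positivity)
  apply Finset.sum_nonneg
  intro xn _
  apply mul_nonneg _ ((hE p.1).1 xn)
  exact Finset.prod_nonneg fun i _ => (hC i (xn i)).1 (p.2 i)

lemma jointGen_margJ (hC : ∀ i, IsChannel (C i))
    (hE : ∀ j, (∀ xn, 0 ≤ E j xn) ∧ ∑ xn : Fin n → X, E j xn = 1) :
    ∀ j, ∑ zn : Fin n → Z, jointGen n C E (j, zn) = ((Fintype.card J : ℝ))⁻¹ := by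
  classical
  intro j
  simp only [jointGen]
  rw [← Finset.mul_sum]
  rw [Finset.sum_comm]
  have : ∀ xn : Fin n → X, ∑ zn : Fin n → Z, (∏ i, C i (xn i) (zn i)) * E j xn
      = E j xn := by
    intro xn
    rw [← Finset.sum_mul]
    rw [sum_prod_fun (fun i z => C i (xn i) z)]
    rw [Finset.prod_eq_one fun i _ => (hC i (xn i)).2, one_mul]
  rw [Finset.sum_congr rfl fun xn _ => this xn, (hE j).2, mul_one]

lemma jointGen_total (hC : ∀ i, IsChannel (C i))
    (hE : ∀ j, (∀ xn, 0 ≤ E j xn) ∧ ∑ xn : Fin n → X, E j xn = 1) :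
    ∑ j : J, ∑ zn : Fin n → Z, jointGen n C E (j, zn) = 1 := by
  rw [Finset.sum_congr rfl fun j _ => jointGen_margJ C E hC hE j]
  rw [Finset.sum_const, Finset.card_univ, nsmul_eq_mul]
  field_simp

lemma jointGen_mi_nonneg (hC : ∀ i, IsChannel (C i))
    (hE : ∀ j, (∀ xn, 0 ≤ E j xn) ∧ ∑ xn : Fin n → X, E j xn = 1) :
    0 ≤ mutInf (jointGen n C E) :=
  mutInf_nonneg _ (jointGen_nonneg C E hC hE) (jointGen_total C E hC hE)

lemma jointGen_mi_le (hC : ∀ i, IsChannel (C i))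
    (hE : ∀ j, (∀ xn, 0 ≤ E j xn) ∧ ∑ xn : Fin n → X, E j xn = 1) :
    mutInf (jointGen n C E) ≤ (n:ℝ) * Real.logb 2 (Fintype.card Z) := by
  classical
  rw [mutInf_eq_ent _ (jointGen_nonneg C E hC hE)]
  have h1 : ∑ j : J, ent2 (∑ zn : Fin n → Z, jointGen n C E (j, zn))
      ≤ ∑ j : J, ∑ zn : Fin n → Z, ent2 (jointGen n C E (j, zn)) :=
    margU_ent_le _ (jointGen_nonneg C E hC hE)
  have h2 : ∑ zn : Fin n → Z, ent2 (∑ j : J, jointGen n C E (j, zn))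
      ≤ Real.logb 2 (Fintype.card (Fin n → Z)) := by
    apply sum_ent2_le_logb
    · intro zn
      exact Finset.sum_nonneg fun j _ => jointGen_nonneg C E hC hE (j, zn)
    · rw [Finset.sum_comm]
      exact jointGen_total C E hC hE
  have h3 : Real.logb 2 (Fintype.card (Fin n → Z)) = (n:ℝ) * Real.logb 2 (Fintype.card Z) := by
    rw [Fintype.card_fun, Fintype.card_fin]
    rw [Nat.cast_pow, Real.logb_pow]
  rw [h3] at h2
  linarith

end jointGenFacts

lemma mi_step {X Z J : Type*} [Fintype X] [Fintype Z] [Fintype J] [Nonempty J] {n : ℕ}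
    (k0 : Fin n) {ε : ℝ} (hε0 : 0 < ε) (hε2 : ε ≤ 1/2) (hZ : 2 ≤ Fintype.card Z)
    (E : J → (Fin n → X) → ℝ)
    (hE : ∀ j, (∀ xn, 0 ≤ E j xn) ∧ ∑ xn : Fin n → X, E j xn = 1)
    (C D : Fin n → X → Z → ℝ) (hC : ∀ i, IsChannel (C i)) (hD : ∀ i, IsChannel (D i))
    (hCD : ∀ i, i ≠ k0 → C i = D i)
    (hk : ∀ x, ∑ z, |C k0 x z - D k0 x z| ≤ ε) :
    |mutInf (jointGen n C E) - mutInf (jointGen n D E)| ≤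
      4 * ε * Real.logb 2 (Fintype.card Z) + 4 * H2 ε := by
  classical
  set μ : (J × (Fin n → X)) → ℝ := fun ω => ((Fintype.card J : ℝ))⁻¹ * E ω.1 ω.2 with hμ
  have hμ0 : ∀ ω, 0 ≤ μ ω := by
    rintro ⟨j, x⟩
    exact mul_nonneg (by positivity) ((hE j).1 x)
  have hμ1 : ∑ ω, μ ω = 1 := by
    rw [Fintype.sum_prod_type]
    have : ∀ j : J, ∑ x : Fin n → X, μ (j, x) = ((Fintype.card J : ℝ))⁻¹ := by
      intro j
      rw [hμ]
      simp only
      rw [← Finset.mul_sum, (hE j).2, mul_one]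
    rw [Finset.sum_congr rfl fun j _ => this j]
    rw [Finset.sum_const, Finset.card_univ, nsmul_eq_mul]
    field_simp
  -- identification for arbitrary channel family
  have ident1 : ∀ (W : Fin n → X → Z → ℝ) (zn : Fin n → Z),
      (∑ ω : J × (Fin n → X), μ ω * ∏ i, W i (ω.2 i) (zn i))
        = ∑ j : J, jointGen n W E (j, zn) := by
    intro W zn
    rw [Fintype.sum_prod_type]
    apply Finset.sum_congr rfl; intro j _
    simp only [jointGen, hμ]
    rw [Finset.mul_sum]
    apply Finset.sum_congr rfl; intro x _
    ring
  have ident2 : ∀ (W : Fin n → X → Z → ℝ) (t : J) (zn : Fin n → Z),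
      (∑ ω : J × (Fin n → X), (if ω.1 = t then μ ω else 0) * ∏ i, W i (ω.2 i) (zn i))
        = jointGen n W E (t, zn) := by
    intro W t zn
    rw [Fintype.sum_prod_type]
    have inner : ∀ j : J, (∑ x : Fin n → X, (if j = t then μ (j, x) else 0) * ∏ i, W i (x i) (zn i))
        = if j = t then jointGen n W E (t, zn) else 0 := by
      intro j
      split
      · next h =>
        subst h
        simp only [jointGen, hμ]
        rw [Finset.mul_sum]
        apply Finset.sum_congr rfl; intro x _
        ring
      · simp
    rw [Finset.sum_congr rfl fun j _ => inner j]
    simp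
  -- entropy-difference bounds from hent_close
  have hJoint := hent_close (T := J) k0 hε0 hε2 hZ μ hμ0 hμ1 Prod.fst Prod.snd C D hC hD hCD hk
  have hMarg := hent_close (T := PUnit.{1}) k0 hε0 hε2 hZ μ hμ0 hμ1 (fun _ => PUnit.unit) Prod.snd
    C D hC hD hCD hk
  -- rewrite them
  have eJ : ∀ (W : Fin n → X → Z → ℝ),
      (∑ t : J, ∑ zn : Fin n → Z,
        ent2 (∑ ω : J × (Fin n → X), (if ω.1 = t then μ ω else 0) * ∏ i, W i (ω.2 i) (zn i)))
      = ∑ t : J, ∑ zn : Fin n → Z, ent2 (jointGen n W E (t, zn)) := by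
    intro W
    apply Finset.sum_congr rfl; intro t _
    apply Finset.sum_congr rfl; intro zn _
    rw [ident2 W t zn]
  have eM : ∀ (W : Fin n → X → Z → ℝ),
      (∑ t : PUnit.{1}, ∑ zn : Fin n → Z,
        ent2 (∑ ω : J × (Fin n → X), (if PUnit.unit = t then μ ω else 0) * ∏ i, W i (ω.2 i) (zn i)))
      = ∑ zn : Fin n → Z, ent2 (∑ j : J, jointGen n W E (j, zn)) := by
    intro W
    rw [Fintype.sum_unique]  -- PUnit sum?
    simp only [eq_iff_true_of_subsingleton, if_true]
    apply Finset.sum_congr rfl; intro zn _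
    rw [ident1 W zn]
  rw [eJ C, eJ D] at hJoint
  rw [eM C, eM D] at hMarg
  -- mutual information decomposition; the J-marginal parts coincide
  rw [mutInf_eq_ent _ (jointGen_nonneg C E hC hE), mutInf_eq_ent _ (jointGen_nonneg D E hD hE)]
  have mJ : ∀ (W : Fin n → X → Z → ℝ), (∀ i, IsChannel (W i)) →
      (∑ j : J, ent2 (∑ zn : Fin n → Z, jointGen n W E (j, zn)))
        = ∑ j : J, ent2 ((Fintype.card J : ℝ))⁻¹ := by
    intro W hW
    exact Finset.sum_congr rfl fun j _ => by rw [jointGen_margJ W E hW hE j]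
  rw [mJ C hC, mJ D hD]
  have expand : ∀ a b c b' c' : ℝ, (a + b - c) - (a + b' - c') = (b - b') - (c - c') := by
    intros; ring
  rw [expand]
  calc |(∑ zn : Fin n → Z, ent2 (∑ j : J, jointGen n C E (j, zn))
          - ∑ zn : Fin n → Z, ent2 (∑ j : J, jointGen n D E (j, zn)))
        - ((∑ j : J, ∑ zn : Fin n → Z, ent2 (jointGen n C E (j, zn)))
          - ∑ j : J, ∑ zn : Fin n → Z, ent2 (jointGen n D E (j, zn)))|
      ≤ |(∑ zn : Fin n → Z, ent2 (∑ j : J, jointGen n C E (j, zn))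
          - ∑ zn : Fin n → Z, ent2 (∑ j : J, jointGen n D E (j, zn)))|
        + |(∑ j : J, ∑ zn : Fin n → Z, ent2 (jointGen n C E (j, zn)))
          - ∑ j : J, ∑ zn : Fin n → Z, ent2 (jointGen n D E (j, zn))| := abs_sub _ _
  _ ≤ (2 * ε * Real.logb 2 (Fintype.card Z) + 2 * H2 ε)
      + (2 * ε * Real.logb 2 (Fintype.card Z) + 2 * H2 ε) := add_le_add hMarg hJoint
  _ = 4 * ε * Real.logb 2 (Fintype.card Z) + 4 * H2 ε := by ring


lemma mi_tele {X Z J : Type*} [Fintype X] [Fintype Z] [Fintype J] [Nonempty J] {n : ℕ}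
    {ε : ℝ} (hε0 : 0 < ε) (hε2 : ε ≤ 1/2) (hZ : 2 ≤ Fintype.card Z)
    (E : J → (Fin n → X) → ℝ)
    (hE : ∀ j, (∀ xn, 0 ≤ E j xn) ∧ ∑ xn : Fin n → X, E j xn = 1)
    (W W' : Fin n → X → Z → ℝ) (hW : ∀ i, IsChannel (W i)) (hW' : ∀ i, IsChannel (W' i))
    (hrow : ∀ i x, ∑ z, |W i x z - W' i x z| ≤ ε) :
    |mutInf (jointGen n W E) - mutInf (jointGen n W' E)| ≤
      (n:ℝ) * (4 * ε * Real.logb 2 (Fintype.card Z) + 4 * H2 ε) := by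
  classical
  set Bd := 4 * ε * Real.logb 2 (Fintype.card Z) + 4 * H2 ε with hBd
  set F : ℕ → Fin n → X → Z → ℝ := fun k i => if (i:ℕ) < k then W i else W' i with hF
  have hFchan : ∀ k i, IsChannel (F k i) := by
    intro k i
    rw [hF]; simp only
    split
    · exact hW i
    · exact hW' i
  have key : ∀ m, m ≤ n →
      |mutInf (jointGen n (F m) E) - mutInf (jointGen n (F 0) E)| ≤ (m:ℝ) * Bd := by
    intro m
    induction m with
    | zero => intro _; simp
    | succ m ih =>
      intro hm
      have hmn : m < n := lt_of_lt_of_le (Nat.lt_succ_self m) hm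
      have ihm := ih (le_of_lt hmn)
      have hCD : ∀ i, i ≠ (⟨m, hmn⟩ : Fin n) → F (m+1) i = F m i := by
        intro i hi
        have hv : (i:ℕ) ≠ m := fun h => hi (Fin.ext h)
        rw [hF]; simp only
        rcases lt_trichotomy (i:ℕ) m with h | h | h
        · rw [if_pos (by omega), if_pos h]
        · exact absurd h hv
        · rw [if_neg (by omega), if_neg (by omega)]
      have hF1 : F (m+1) (⟨m, hmn⟩ : Fin n) = W (⟨m, hmn⟩ : Fin n) := by
        rw [hF]; simp only
        rw [if_pos (Nat.lt_succ_self m)]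
      have hF0 : F m (⟨m, hmn⟩ : Fin n) = W' (⟨m, hmn⟩ : Fin n) := by
        rw [hF]; simp only
        rw [if_neg (lt_irrefl m)]
      have hk : ∀ x, ∑ z, |F (m+1) (⟨m, hmn⟩ : Fin n) x z - F m (⟨m, hmn⟩ : Fin n) x z| ≤ ε := by
        intro x
        rw [hF1, hF0]
        exact hrow (⟨m, hmn⟩ : Fin n) x
      have step := mi_step (⟨m, hmn⟩ : Fin n) hε0 hε2 hZ E hE (F (m+1)) (F m)
        (hFchan (m+1)) (hFchan m) hCD hk
      have tri := abs_sub_le (mutInf (jointGen n (F (m+1)) E)) (mutInf (jointGen n (F m) E))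
        (mutInf (jointGen n (F 0) E))
      rw [← hBd] at step
      push_cast
      nlinarith
  have hFn : F n = W := by
    funext i
    rw [hF]; simp only
    rw [if_pos i.isLt]
  have hF0 : F 0 = W' := by
    funext i
    rw [hF]; simp only
    rw [if_neg (Nat.not_lt_zero _)]
  have := key n le_rfl
  rw [hFn, hF0] at this
  exact this


/-- robustness of the weak-secrecy information leakage of an unassisted code
under perturbation of the eavesdropper AVC. -/
theorem weak_secrecy_robustness {X Z S S' : Type*}
    [Fintype X] [Fintype Z] [Fintype S] [Fintype S'] [Nonempty S] [Nonempty S']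
    {ε : ℝ} (hε : ε ∈ Set.Ioo (0 : ℝ) 1)
    (V : S → X → Z → ℝ) (V' : S' → X → Z → ℝ)
    (hV : ∀ s, IsChannel (V s)) (hV' : ∀ s, IsChannel (V' s))
    (hD : Davc V V' ≤ ε)
    (n : ℕ) {J : Type*} [Fintype J] [Nonempty J]
    (E : J → (Fin n → X) → ℝ)
    (hE : ∀ j, (∀ xn, 0 ≤ E j xn) ∧ ∑ xn : Fin n → X, E j xn = 1)
    (δn : ℝ)
    (hδ : (⨆ sn : Fin n → S, (1 / (n : ℝ)) * mutInf (jointAVC n V sn E)) = δn) :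
    (⨆ sn : Fin n → S', (1 / (n : ℝ)) * mutInf (jointAVC n V' sn E)) ≤
      δn + 4 * ε * Real.logb 2 (Fintype.card Z) + 4 * H2 ε := by
  classical
  obtain ⟨hε0, hε1⟩ := hε
  subst hδ
  have hH2 : 0 ≤ H2 ε := H2_nonneg hε0.le hε1.le
  have hlogZ : 0 ≤ Real.logb 2 (Fintype.card Z) := by
    rcases Nat.eq_zero_or_pos (Fintype.card Z) with h | h
    · rw [h]; simp
    · exact Real.logb_nonneg one_lt_two' (by exact_mod_cast h)
  have bdd : BddAbove (Set.range fun sn : Fin n → S =>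
      (1 / (n : ℝ)) * mutInf (jointAVC n V sn E)) :=
    Set.Finite.bddAbove (Set.finite_range _)
  -- jointAVC is jointGen
  have hAVC : ∀ (sn : Fin n → S),
      jointAVC n V sn E = jointGen n (fun i => V (sn i)) E := fun _ => rfl
  have hAVC' : ∀ (sn : Fin n → S'),
      jointAVC n V' sn E = jointGen n (fun i => V' (sn i)) E := fun _ => rfl
  apply ciSup_le
  intro s'n
  rcases Nat.eq_zero_or_pos n with hn | hn
  · -- n = 0 : both sides have the 1/0 = 0 factor
    subst hn
    obtain ⟨sn0⟩ : Nonempty (Fin 0 → S) := inferInstance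
    have h0 := le_ciSup bdd sn0
    simp only [Nat.cast_zero, div_zero, zero_mul] at h0 ⊢
    nlinarith
  -- n > 0
  have hXne : Nonempty X := by
    by_contra hX
    haveI : IsEmpty (Fin n → X) := ⟨fun f => hX ⟨f ⟨0, hn⟩⟩⟩
    have := (hE (Classical.arbitrary J)).2
    rw [Finset.univ_eq_empty, Finset.sum_empty] at this
    exact zero_ne_one this
  have hZ1 : 1 ≤ Fintype.card Z := by
    by_contra hZ0
    haveI : IsEmpty Z := by
      rw [not_le, Nat.lt_one_iff] at hZ0
      exact Fintype.card_eq_zero_iff.mp hZ0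
    obtain ⟨x0⟩ := hXne
    have h1 := (hV (Classical.arbitrary S) x0).2
    rw [Finset.univ_eq_empty, Finset.sum_empty] at h1
    exact zero_ne_one h1
  -- choose matching states
  have hmatch : ∀ s' : S', ∃ s : S, ∀ x, ∑ z, |V s x z - V' s' x z| ≤ ε := by
    intro s'
    have h1 : (⨅ s : S, dChan (V s) (V' s')) ≤ ε := by
      have h2 : (⨅ s : S, dChan (V s) (V' s')) ≤
          ⨆ s'' : S', ⨅ s : S, dChan (V s) (V' s'') :=
        le_ciSup (f := fun s'' : S' => ⨅ s : S, dChan (V s) (V' s''))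
          (Set.Finite.bddAbove (Set.finite_range _)) s'
      have h3 : (⨆ s'' : S', ⨅ s : S, dChan (V s) (V' s'')) ≤ ε :=
        le_trans (le_max_left _ _) hD
      exact le_trans h2 h3
    obtain ⟨s0, hs0⟩ := Finite.exists_min (fun s : S => dChan (V s) (V' s'))
    refine ⟨s0, fun x => ?_⟩
    have h4 : dChan (V s0) (V' s') ≤ ⨅ s : S, dChan (V s) (V' s') := le_ciInf hs0
    have h5 : (∑ z, |V s0 x z - V' s' x z|) ≤ dChan (V s0) (V' s') :=
      le_ciSup (f := fun x : X => ∑ z : Z, |V s0 x z - V' s' x z|)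
        (Set.Finite.bddAbove (Set.finite_range _)) x
    linarith
  choose f hf using hmatch
  set sn : Fin n → S := fun i => f (s'n i) with hsn
  have hsup_ge := le_ciSup bdd sn
  have hMInn : 0 ≤ mutInf (jointAVC n V sn E) := by
    rw [hAVC sn]
    exact jointGen_mi_nonneg _ E (fun i => hV (sn i)) hE
  have hnR : (0:ℝ) < (n:ℝ) := by exact_mod_cast hn
  by_cases htriv : 1/2 ≤ ε ∨ Fintype.card Z < 2
  · -- trivial bound
    have hMIle : mutInf (jointAVC n V' s'n E) ≤ (n:ℝ) * Real.logb 2 (Fintype.card Z) := by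
      rw [hAVC' s'n]
      exact jointGen_mi_le _ E (fun i => hV' (s'n i)) hE
    have key : (1 / (n : ℝ)) * mutInf (jointAVC n V' s'n E) ≤
        4 * ε * Real.logb 2 (Fintype.card Z) := by
      rcases htriv with h | h
      · have h1 : (1 / (n : ℝ)) * mutInf (jointAVC n V' s'n E) ≤ Real.logb 2 (Fintype.card Z) := by
          rw [div_mul_eq_mul_div, one_mul, div_le_iff₀ hnR]
          calc mutInf (jointAVC n V' s'n E) ≤ (n:ℝ) * Real.logb 2 (Fintype.card Z) := hMIle
          _ = Real.logb 2 (Fintype.card Z) * (n:ℝ) := by ring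
        nlinarith
      · have hcard : Fintype.card Z = 1 := le_antisymm (by omega) hZ1
        have hlog0 : Real.logb 2 (Fintype.card Z) = 0 := by
          rw [hcard]; simp
        rw [hlog0] at hMIle ⊢
        rw [mul_zero] at hMIle
        have : (1 / (n : ℝ)) * mutInf (jointAVC n V' s'n E) ≤ 0 := by
          apply mul_nonpos_of_nonneg_of_nonpos _ hMIle
          positivity
        simpa using this
    have hge0 : 0 ≤ (1 / (n : ℝ)) * mutInf (jointAVC n V sn E) := by positivity
    have : 0 ≤ ⨆ sn : Fin n → S, (1 / (n : ℝ)) * mutInf (jointAVC n V sn E) :=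
      le_trans hge0 hsup_ge
    linarith
  · push_neg at htriv
    obtain ⟨hεhalf, hZ2'⟩ := htriv
    have hZ2 : 2 ≤ Fintype.card Z := hZ2'
    have tele := mi_tele hε0 hεhalf.le hZ2 E hE (fun i => V (sn i)) (fun i => V' (s'n i))
      (fun i => hV (sn i)) (fun i => hV' (s'n i)) (fun i x => hf (s'n i) x)
    rw [← hAVC sn, ← hAVC' s'n] at tele
    have habs : mutInf (jointAVC n V' s'n E) ≤ mutInf (jointAVC n V sn E) +
        (n:ℝ) * (4 * ε * Real.logb 2 (Fintype.card Z) + 4 * H2 ε) := by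
      have := abs_le.mp tele
      linarith [this.1]
    have hdiv : (1 / (n : ℝ)) * mutInf (jointAVC n V' s'n E) ≤
        (1 / (n : ℝ)) * mutInf (jointAVC n V sn E) +
          (4 * ε * Real.logb 2 (Fintype.card Z) + 4 * H2 ε) := by
      have hmul := mul_le_mul_of_nonneg_left habs (by positivity : (0:ℝ) ≤ 1 / (n:ℝ))
      have hcan : (1 / (n : ℝ)) * ((n:ℝ) * (4 * ε * Real.logb 2 (Fintype.card Z) + 4 * H2 ε))
          = 4 * ε * Real.logb 2 (Fintype.card Z) + 4 * H2 ε := by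
        field_simp
      calc (1 / (n : ℝ)) * mutInf (jointAVC n V' s'n E)
          ≤ (1 / (n : ℝ)) * (mutInf (jointAVC n V sn E) +
            (n:ℝ) * (4 * ε * Real.logb 2 (Fintype.card Z) + 4 * H2 ε)) := hmul
      _ = (1 / (n : ℝ)) * mutInf (jointAVC n V sn E) +
            (1 / (n : ℝ)) * ((n:ℝ) * (4 * ε * Real.logb 2 (Fintype.card Z) + 4 * H2 ε)) := by ring
      _ = _ := by rw [hcan]
    calc (1 / (n : ℝ)) * mutInf (jointAVC n V' s'n E)
        ≤ (1 / (n : ℝ)) * mutInf (jointAVC n V sn E) +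
          (4 * ε * Real.logb 2 (Fintype.card Z) + 4 * H2 ε) := hdiv
    _ ≤ (⨆ sn : Fin n → S, (1 / (n : ℝ)) * mutInf (jointAVC n V sn E)) +
          (4 * ε * Real.logb 2 (Fintype.card Z) + 4 * H2 ε) := by linarith
    _ = _ := by ring
end

section
/- Let V = {V(·|·,s)}_{s∈S} and V* = {V*(·|·,s*)}_{s*∈S*} be two AVCs from a finite input alphabet X to a finite output alphabet Z with finite state sets S and S*, and suppose D(V,V*) ≤ ε for some ε ∈ (0,1). Let n ∈ ℕ, let J be a finite message set with uniform distribution, let G_n be a finite set with distribution P_Γ ∈ P(G_n), and for each γ ∈ G_n let E_γ(xⁿ|j) be a stochastic encoder; for a state sequence sⁿ and γ ∈ G_n let P_{sⁿ,γ}(j,zⁿ) = (1/|J|)·∑_{xⁿ} ∏_{i=1}^n V(z_i|x_i,s_i) · E_γ(xⁿ|j), and analogously P*_{s*ⁿ,γ} for V*. If max_{sⁿ∈Sⁿ} (1/n)·∑_{γ∈G_n} P_Γ(γ)·I(J;Zⁿ‖P_{sⁿ,γ}) = δ_n, then max_{s*ⁿ∈S*ⁿ} (1/n)·∑_{γ∈G_n}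 P_Γ(γ)·I(J;Zⁿ‖P*_{s*ⁿ,γ}) ≤ δ_n + 4ε·log|Z| + 4H₂(ε). -/
open Real Finset

section Aux
variable {α : Type*} [Fintype α]

/-- Gibbs' inequality building block. -/
lemma gibbs_aux (p q : α → ℝ) (hp : ∀ a, 0 ≤ p a) (hq : ∀ a, 0 ≤ q a)
    (hpq : ∀ a, p a ≠ 0 → q a ≠ 0) :
    ∑ a, p a * Real.log (q a / p a) ≤ ∑ a, q a - ∑ a, p a := by
  rw [← Finset.sum_sub_distrib]
  apply Finset.sum_le_sum
  intro a _
  by_cases h : p a = 0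
  · simp [h, hq a]
  · have hp' : 0 < p a := lt_of_le_of_ne (hp a) (Ne.symm h)
    have hq' : 0 < q a := lt_of_le_of_ne (hq a) (Ne.symm (hpq a h))
    have hlog := Real.log_le_sub_one_of_pos (div_pos hq' hp')
    calc p a * Real.log (q a / p a) ≤ p a * (q a / p a - 1) :=
          mul_le_mul_of_nonneg_left hlog (hp a)
      _ = q a - p a := by field_simp

noncomputable def entn (p : α → ℝ) : ℝ := ∑ a, Real.negMulLog (p a)

lemma IsProb.le_one {p : α → ℝ} (hp : IsProb p) (a : α) : p a ≤ 1 := by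
  rw [← hp.2]
  exact Finset.single_le_sum (fun b _ => hp.1 b) (Finset.mem_univ a)

lemma entn_nonneg {p : α → ℝ} (hp : IsProb p) : 0 ≤ entn p :=
  Finset.sum_nonneg fun a _ => Real.negMulLog_nonneg (hp.1 a) (hp.le_one a)

lemma IsProb.card_pos {p : α → ℝ} (hp : IsProb p) : 0 < Fintype.card α := by
  rcases Nat.eq_zero_or_pos (Fintype.card α) with h | h
  · have : IsEmpty α := Fintype.card_eq_zero_iff.mp h
    have := hp.2
    simp [Finset.univ_eq_empty] at this
  · exact h

lemma entn_le_log {p : α → ℝ} (hp : IsProb p) :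
    entn p ≤ Real.log (Fintype.card α) := by
  have hN : 0 < (Fintype.card α : ℝ) := by exact_mod_cast hp.card_pos
  have key : ∀ a, Real.negMulLog (p a) =
      p a * Real.log ((Fintype.card α : ℝ)⁻¹ / p a) + p a * Real.log (Fintype.card α) := by
    intro a
    by_cases h : p a = 0
    · simp [h]
    · rw [Real.log_div (by positivity) h, Real.log_inv, Real.negMulLog]
      ring
  have hsum : entn p = (∑ a, p a * Real.log ((Fintype.card α : ℝ)⁻¹ / p a))
      + Real.log (Fintype.card α) := by
    rw [entn]
    rw [Finset.sum_congr rfl (fun a _ => key a), Finset.sum_add_distrib, ← Finset.sum_mul, hp.2,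
      one_mul]
  have hg := gibbs_aux p (fun _ => (Fintype.card α : ℝ)⁻¹) hp.1
    (fun _ => by positivity) (fun a _ => by positivity)
  rw [hp.2] at hg
  simp only [Finset.sum_const, Finset.card_univ, nsmul_eq_mul] at hg
  rw [mul_inv_cancel₀ (ne_of_gt hN)] at hg
  linarith [hsum, hg]

lemma negMulLog_add_le {x y : ℝ} (hx : 0 ≤ x) (hy : 0 ≤ y) :
    Real.negMulLog (x + y) ≤ Real.negMulLog x + Real.negMulLog y := by
  simp only [Real.negMulLog]
  have h1 : x * Real.log x ≤ x * Real.log (x + y) := by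
    rcases eq_or_lt_of_le hx with h | h
    · simp [← h]
    · exact mul_le_mul_of_nonneg_left (Real.log_le_log h (by linarith)) hx
  have h2 : y * Real.log y ≤ y * Real.log (x + y) := by
    rcases eq_or_lt_of_le hy with h | h
    · simp [← h]
    · exact mul_le_mul_of_nonneg_left (Real.log_le_log h (by linarith)) hy
  nlinarith
end Aux

set_option maxHeartbeats 1000000

section Fannes
variable {α : Type*} [Fintype α]

lemma fannes_one_sided {ε : ℝ} (hε0 : 0 < ε) (hε1 : ε < 1)
    {p q : α → ℝ} (hp : IsProb p) (hq : IsProb q)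
    (hL : ∑ a, |p a - q a| ≤ ε) :
    entn q - entn p ≤ 2 * ε * Real.log (Fintype.card α) + 2 * Real.binEntropy ε := by
  have hbin : 0 ≤ Real.binEntropy ε := Real.binEntropy_nonneg hε0.le hε1.le
  have hN1 : (1 : ℝ) ≤ (Fintype.card α : ℝ) := by exact_mod_cast hp.card_pos
  have hlogN0 : 0 ≤ Real.log (Fintype.card α) := Real.log_nonneg hN1
  rcases le_or_gt (1/2 : ℝ) ε with hhalf | hhalf
  · have h1 : entn q - entn p ≤ Real.log (Fintype.card α) := by
      linarith [entn_nonneg hp, entn_le_log hq]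
    nlinarith
  · -- ε < 1/2
    set d : α → ℝ := fun a => max (q a - p a) 0 with hd_def
    have hd0 : ∀ a, 0 ≤ d a := fun a => le_max_right _ _
    set D := ∑ a, d a with hD_def
    have hD0 : 0 ≤ D := Finset.sum_nonneg fun a _ => hd0 a
    have hsum0 : ∑ a, (q a - p a) = 0 := by
      rw [Finset.sum_sub_distrib, hp.2, hq.2]; ring
    have hDval : 2 * D = ∑ a, |p a - q a| := by
      rw [hD_def, Finset.mul_sum]
      have : ∀ a, 2 * d a = (q a - p a) + |p a - q a| := by
        intro a
        rcases le_total (q a - p a) 0 with h | h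
        · rw [hd_def]; simp only []
          rw [max_eq_right h, abs_sub_comm, abs_of_nonpos h]; ring
        · rw [hd_def]; simp only []
          rw [max_eq_left h, abs_sub_comm, abs_of_nonneg h]; ring
      rw [Finset.sum_congr rfl (fun a _ => this a), Finset.sum_add_distrib, hsum0, zero_add]
    have hD2 : D ≤ ε / 2 := by linarith [hDval ▸ hL]
    by_cases hDz : D = 0
    · have hda : ∀ a ∈ Finset.univ, d a = 0 :=
        (Finset.sum_eq_zero_iff_of_nonneg (fun a _ => hd0 a)).mp (hD_def ▸ hDz)
      have hqlep : ∀ a, q a ≤ p a := by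
        intro a
        have h1 := le_max_left (q a - p a) 0
        have h2 := hda a (Finset.mem_univ a)
        rw [hd_def] at h2; simp only [] at h2
        linarith [h2 ▸ h1]
      have hpq : ∀ a ∈ Finset.univ, p a - q a = 0 := by
        apply (Finset.sum_eq_zero_iff_of_nonneg (fun a _ => by linarith [hqlep a])).mp
        rw [Finset.sum_sub_distrib, hp.2, hq.2]; ring
      have : p = q := funext fun a => by linarith [hpq a (Finset.mem_univ a)]
      rw [this]
      nlinarith
    · have hDpos : 0 < D := lt_of_le_of_ne hD0 (Ne.symm hDz)
      -- card ≥ 2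
      have hN2 : (2 : ℝ) ≤ (Fintype.card α : ℝ) := by
        by_contra hcon
        have hcard1 : Fintype.card α = 1 := by
          have h1 := hp.card_pos
          have h2 : Fintype.card α < 2 := by exact_mod_cast not_le.mp hcon
          omega
        obtain ⟨a, ha⟩ := Fintype.card_eq_one_iff.mp hcard1
        have huniv : (Finset.univ : Finset α) = {a} :=
          Finset.eq_singleton_iff_unique_mem.mpr ⟨Finset.mem_univ a, fun b _ => ha b⟩
        have hpa : p a = 1 := by have := hp.2; rwa [huniv, Finset.sum_singleton] at this
        have hqa : q a = 1 := by have := hq.2; rwa [huniv, Finset.sum_singleton] at this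
        have : D = 0 := by
          rw [hD_def, huniv, Finset.sum_singleton, hd_def]
          simp [hpa, hqa]
        exact hDz this
      have hc1 : (0:ℝ) < 1 + D := by linarith
      set c := (1 + D)⁻¹ with hc_def
      have hcpos : 0 < c := inv_pos.2 hc1
      set m : α → ℝ := fun a => (p a + d a) * c with hm_def
      have hm0 : ∀ a, 0 ≤ m a := fun a =>
        mul_nonneg (add_nonneg (hp.1 a) (hd0 a)) hcpos.le
      have hmsum : ∑ a, m a = 1 := by
        rw [hm_def]
        simp only []
        rw [← Finset.sum_mul, Finset.sum_add_distrib, hp.2, ← hD_def, hc_def]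
        field_simp
      have hm1 : ∀ a, m a ≤ 1 := by
        intro a
        rw [← hmsum]
        exact Finset.single_le_sum (fun b _ => hm0 b) (Finset.mem_univ a)
      have hmq : ∀ a, c * q a ≤ m a := by
        intro a
        have h1 : q a - p a ≤ d a := le_max_left _ _
        have h2 : q a ≤ p a + d a := by linarith
        calc c * q a ≤ c * (p a + d a) := mul_le_mul_of_nonneg_left h2 hcpos.le
          _ = m a := by rw [hm_def]; ring
      -- upper bound on entropy of m
      have hup : ∑ a, Real.negMulLog (m a) ≤
          c * entn p + Real.negMulLog c +
          (c * (Real.negMulLog D + D * Real.log (Fintype.card α)) + D * Real.negMulLog c) := by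
        have step1 : ∑ a, Real.negMulLog (m a) ≤
            ∑ a, Real.negMulLog (p a * c) + ∑ a, Real.negMulLog (d a * c) := by
          rw [← Finset.sum_add_distrib]
          apply Finset.sum_le_sum
          intro a _
          have : m a = p a * c + d a * c := by rw [hm_def]; ring
          rw [this]
          exact negMulLog_add_le (mul_nonneg (hp.1 a) hcpos.le) (mul_nonneg (hd0 a) hcpos.le)
        have step2 : ∑ a, Real.negMulLog (p a * c) = c * entn p + Real.negMulLog c := by
          have : ∀ a, Real.negMulLog (p a * c) =
              c * Real.negMulLog (p a) + p a * Real.negMulLog c := fun a =>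
            Real.negMulLog_mul (p a) c
          rw [Finset.sum_congr rfl (fun a _ => this a), Finset.sum_add_distrib,
            ← Finset.mul_sum, ← Finset.sum_mul, hp.2, entn, one_mul]
        have step4 : ∑ a, Real.negMulLog (d a) ≤ Real.negMulLog D + D * Real.log (Fintype.card α) := by
          set r : α → ℝ := fun a => d a / D with hr_def
          have hr : IsProb r := by
            constructor
            · intro a; exact div_nonneg (hd0 a) hD0
            · rw [hr_def]; simp only []
              rw [← Finset.sum_div, ← hD_def, div_self hDz]
          have hdr : ∀ a, d a = D * r a := by
            intro a; rw [hr_def]; field_simp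
          have : ∀ a, Real.negMulLog (d a) =
              r a * Real.negMulLog D + D * Real.negMulLog (r a) := by
            intro a; rw [hdr a]; exact Real.negMulLog_mul D (r a)
          rw [Finset.sum_congr rfl (fun a _ => this a), Finset.sum_add_distrib,
            ← Finset.sum_mul, ← Finset.mul_sum, hr.2, one_mul]
          have := entn_le_log hr
          rw [entn] at this
          nlinarith
        have step3 : ∑ a, Real.negMulLog (d a * c) =
            c * ∑ a, Real.negMulLog (d a) + D * Real.negMulLog c := by
          have : ∀ a, Real.negMulLog (d a * c) =
              c * Real.negMulLog (d a) + d a * Real.negMulLog c := fun a =>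
            Real.negMulLog_mul (d a) c
          rw [Finset.sum_congr rfl (fun a _ => this a), Finset.sum_add_distrib,
            ← Finset.mul_sum, ← Finset.sum_mul, ← hD_def]
        have : c * ∑ a, Real.negMulLog (d a) ≤
            c * (Real.negMulLog D + D * Real.log (Fintype.card α)) :=
          mul_le_mul_of_nonneg_left step4 hcpos.le
        linarith [step1, step2, step3, this]
      -- lower bound on entropy of m
      have hlow : c * entn q ≤ ∑ a, Real.negMulLog (m a) := by
        have hsupp : ∀ a, q a ≠ 0 → m a ≠ 0 := by
          intro a hqa
          have : 0 < q a := lt_of_le_of_ne (hq.1 a) (Ne.symm hqa)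
          have : 0 < c * q a := mul_pos hcpos this
          linarith [hmq a]
        have hGibbs := gibbs_aux q m hq.1 hm0 hsupp
        rw [hmsum, hq.2] at hGibbs
        have hsplit : entn q ≤ -∑ a, q a * Real.log (m a) := by
          have hper : ∀ a, q a * Real.log (m a / q a) =
              q a * Real.log (m a) + Real.negMulLog (q a) := by
            intro a
            by_cases h : q a = 0
            · simp [h]
            · rw [Real.log_div (hsupp a h) h, Real.negMulLog]; ring
          rw [Finset.sum_congr rfl (fun a _ => hper a), Finset.sum_add_distrib] at hGibbs
          rw [entn]
          linarith
        have hper2 : ∀ a, c * (q a * (-Real.log (m a))) ≤ Real.negMulLog (m a) := by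
          intro a
          have hlogm : Real.log (m a) ≤ 0 := Real.log_nonpos (hm0 a) (hm1 a)
          have h1 : 0 ≤ (m a - c * q a) * (-Real.log (m a)) :=
            mul_nonneg (by linarith [hmq a]) (by linarith)
          rw [Real.negMulLog]
          nlinarith
        calc c * entn q ≤ c * (-∑ a, q a * Real.log (m a)) :=
              mul_le_mul_of_nonneg_left hsplit hcpos.le
          _ = ∑ a, c * (q a * (-Real.log (m a))) := by
              rw [← Finset.sum_neg_distrib, Finset.mul_sum]
              apply Finset.sum_congr rfl
              intro a _; ring
          _ ≤ ∑ a, Real.negMulLog (m a) := Finset.sum_le_sum fun a _ => hper2 a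
      -- combine
      have hnm : Real.negMulLog c = c * Real.log (1 + D) := by
        rw [hc_def, Real.negMulLog, Real.log_inv]; ring
      have hcomb : entn q - entn p ≤
          (1 + D) * Real.log (1 + D) + Real.negMulLog D + D * Real.log (Fintype.card α) := by
        have h2 := hlow.trans hup
        rw [hnm] at h2
        have hrhs : c * (entn p + (1 + D) * Real.log (1 + D) +
            Real.negMulLog D + D * Real.log (Fintype.card α)) =
            c * entn p + c * Real.log (1 + D) +
            (c * (Real.negMulLog D + D * Real.log (Fintype.card α)) +
              D * (c * Real.log (1 + D))) := by ring
        have h3 : c * entn q ≤ c * (entn p + (1 + D) * Real.log (1 + D) +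
            Real.negMulLog D + D * Real.log (Fintype.card α)) := by
          rw [hrhs]; linarith
        have h4 := (mul_le_mul_iff_of_pos_left hcpos).mp h3
        linarith
      -- final arithmetic
      have hlog1D : Real.log (1 + D) ≤ D := by
        have := Real.log_le_sub_one_of_pos hc1
        linarith
      have hlog1D0 : 0 ≤ Real.log (1 + D) := Real.log_nonneg (by linarith)
      have h4 : (1 + D) * Real.log (1 + D) ≤ 2 * D := by nlinarith
      have hNM : Real.negMulLog D ≤ Real.binEntropy ε := by
        have h5 : Real.negMulLog D ≤ Real.binEntropy D := by
          rw [Real.binEntropy_eq_negMulLog_add_negMulLog_one_sub]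
          have := Real.negMulLog_nonneg (by linarith : (0:ℝ) ≤ 1 - D) (by linarith : (1:ℝ) - D ≤ 1)
          linarith
        have h6 : Real.binEntropy D ≤ Real.binEntropy ε := by
          apply (Real.binEntropy_strictMonoOn ⟨hD0, by norm_num; linarith⟩
            ⟨hε0.le, by norm_num; linarith⟩ (by linarith)).le
        linarith
      have hlog2N : Real.log 2 ≤ Real.log (Fintype.card α) :=
        Real.log_le_log (by norm_num) hN2
      have hlog223 : (2:ℝ)/3 ≤ Real.log (Fintype.card α) := by
        have := Real.log_two_gt_d9
        linarith
      have hDlogN : D * Real.log (Fintype.card α) ≤ ε / 2 * Real.log (Fintype.card α) :=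
        mul_le_mul_of_nonneg_right hD2 hlogN0
      have heps : ε ≤ 3 / 2 * ε * Real.log (Fintype.card α) := by nlinarith
      nlinarith
end Fannes

section Aux2
variable {α : Type*} [Fintype α]

lemma fannes_abs {ε : ℝ} (hε0 : 0 < ε) (hε1 : ε < 1)
    {p q : α → ℝ} (hp : IsProb p) (hq : IsProb q)
    (hL : ∑ a, |p a - q a| ≤ ε) :
    |entn p - entn q| ≤ 2 * ε * Real.log (Fintype.card α) + 2 * Real.binEntropy ε := by
  rw [abs_sub_le_iff]
  constructor
  · exact fannes_one_sided hε0 hε1 hq hp (by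
      refine le_trans (le_of_eq ?_) hL
      exact Finset.sum_congr rfl fun a _ => abs_sub_comm _ _)
  · exact fannes_one_sided hε0 hε1 hp hq hL

/-- Scaled version of Fannes' inequality for sub-distributions of equal mass. -/
lemma fannes_scaled {ε : ℝ} (hε0 : 0 < ε) (hε1 : ε < 1)
    {p q : α → ℝ} {c : ℝ} (hp0 : ∀ a, 0 ≤ p a) (hq0 : ∀ a, 0 ≤ q a)
    (hps : ∑ a, p a = c) (hqs : ∑ a, q a = c)
    (hL : ∑ a, |p a - q a| ≤ ε * c) :
    |∑ a, Real.negMulLog (p a) - ∑ a, Real.negMulLog (q a)| ≤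
      c * (2 * ε * Real.log (Fintype.card α) + 2 * Real.binEntropy ε) := by
  have hc0 : 0 ≤ c := hps ▸ Finset.sum_nonneg fun a _ => hp0 a
  rcases eq_or_lt_of_le hc0 with hc | hc
  · -- c = 0 : p = q = 0
    have hpz : ∀ a ∈ Finset.univ, p a = 0 :=
      (Finset.sum_eq_zero_iff_of_nonneg (fun a _ => hp0 a)).mp (hps.trans hc.symm)
    have hqz : ∀ a ∈ Finset.univ, q a = 0 :=
      (Finset.sum_eq_zero_iff_of_nonneg (fun a _ => hq0 a)).mp (hqs.trans hc.symm)
    have h1 : ∀ a ∈ Finset.univ, Real.negMulLog (p a) = Real.negMulLog (q a) := by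
      intro a ha; rw [hpz a ha, hqz a ha]
    rw [Finset.sum_congr rfl h1]
    simp [← hc]
  · set pn : α → ℝ := fun a => p a / c with hpn_def
    set qn : α → ℝ := fun a => q a / c with hqn_def
    have hpn : IsProb pn := by
      constructor
      · intro a; exact div_nonneg (hp0 a) hc0
      · rw [hpn_def]; simp only []; rw [← Finset.sum_div, hps, div_self (ne_of_gt hc)]
    have hqn : IsProb qn := by
      constructor
      · intro a; exact div_nonneg (hq0 a) hc0
      · rw [hqn_def]; simp only []; rw [← Finset.sum_div, hqs, div_self (ne_of_gt hc)]
    have hLn : ∑ a, |pn a - qn a| ≤ ε := by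
      have : ∀ a, |pn a - qn a| = |p a - q a| / c := by
        intro a
        rw [hpn_def, hqn_def]; simp only []
        rw [div_sub_div_same, abs_div, abs_of_pos hc]
      rw [Finset.sum_congr rfl (fun a _ => this a), ← Finset.sum_div]
      rw [div_le_iff₀ hc]
      linarith [hL]
    have hkey := fannes_abs hε0 hε1 hpn hqn hLn
    have hrw : ∀ (r : α → ℝ), (∀ a, 0 ≤ r a) → (∑ a, r a = c) →
        ∑ a, Real.negMulLog (r a) = c * entn (fun a => r a / c) + Real.negMulLog c := by
      intro r hr0 hrs
      have : ∀ a, Real.negMulLog (r a) =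
          c * Real.negMulLog (r a / c) + (r a / c) * Real.negMulLog c := by
        intro a
        have : r a = c * (r a / c) := by field_simp
        conv_lhs => rw [this]
        rw [Real.negMulLog_mul]
        ring
      rw [Finset.sum_congr rfl (fun a _ => this a), Finset.sum_add_distrib, ← Finset.mul_sum,
        ← Finset.sum_mul, ← Finset.sum_div, hrs, div_self (ne_of_gt hc), one_mul, entn]
    rw [hrw p hp0 hps, hrw q hq0 hqs]
    have : c * entn pn + Real.negMulLog c - (c * entn qn + Real.negMulLog c) =
        c * (entn pn - entn qn) := by ring
    rw [this, abs_mul, abs_of_pos hc]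
    exact mul_le_mul_of_nonneg_left hkey hc0

/-- One-step lemma: changing the channel on a single output coordinate. -/
lemma step_lemma {T U Z : Type*} [Fintype T] [Fintype U] [Fintype Z]
    {ε : ℝ} (hε0 : 0 < ε) (hε1 : ε < 1)
    (μ : T → ℝ) (hμ0 : ∀ t, 0 ≤ μ t) (hμ1 : ∑ t, μ t = 1)
    (R : T → U → ℝ) (hR0 : ∀ t u, 0 ≤ R t u) (hR1 : ∀ t, ∑ u, R t u = 1)
    (W W' : T → Z → ℝ) (hW : IsChannel W) (hW' : IsChannel W')
    (hd : ∀ t, ∑ z, |W t z - W' t z| ≤ ε) :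
    |(∑ u : U, ∑ z : Z, Real.negMulLog (∑ t, μ t * W t z * R t u))
      - ∑ u : U, ∑ z : Z, Real.negMulLog (∑ t, μ t * W' t z * R t u)| ≤
      2 * ε * Real.log (Fintype.card Z) + 2 * Real.binEntropy ε := by
  set m : U → ℝ := fun u => ∑ t, μ t * R t u with hm_def
  have hm0 : ∀ u, 0 ≤ m u := fun u =>
    Finset.sum_nonneg fun t _ => mul_nonneg (hμ0 t) (hR0 t u)
  have hmsum : ∑ u, m u = 1 := by
    rw [hm_def]
    rw [Finset.sum_comm]
    rw [Finset.sum_congr rfl fun t _ => by rw [← Finset.mul_sum, hR1 t, mul_one]]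
    exact hμ1
  have hper : ∀ u, |(∑ z : Z, Real.negMulLog (∑ t, μ t * W t z * R t u))
      - ∑ z : Z, Real.negMulLog (∑ t, μ t * W' t z * R t u)| ≤
      m u * (2 * ε * Real.log (Fintype.card Z) + 2 * Real.binEntropy ε) := by
    intro u
    apply fannes_scaled hε0 hε1
      (fun z => Finset.sum_nonneg fun t _ =>
        mul_nonneg (mul_nonneg (hμ0 t) ((hW t).1 z)) (hR0 t u))
      (fun z => Finset.sum_nonneg fun t _ =>
        mul_nonneg (mul_nonneg (hμ0 t) ((hW' t).1 z)) (hR0 t u))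
    · rw [Finset.sum_comm]
      apply Finset.sum_congr rfl
      intro t _
      rw [Finset.sum_congr rfl fun z (_ : z ∈ Finset.univ) => (by ring :
        μ t * W t z * R t u = μ t * R t u * W t z), ← Finset.mul_sum, (hW t).2, mul_one]
    · rw [Finset.sum_comm]
      apply Finset.sum_congr rfl
      intro t _
      rw [Finset.sum_congr rfl fun z (_ : z ∈ Finset.univ) => (by ring :
        μ t * W' t z * R t u = μ t * R t u * W' t z), ← Finset.mul_sum, (hW' t).2, mul_one]
    · calc ∑ z, |(∑ t, μ t * W t z * R t u) - ∑ t, μ t * W' t z * R t u|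
          ≤ ∑ z, ∑ t, μ t * R t u * |W t z - W' t z| := by
            apply Finset.sum_le_sum
            intro z _
            rw [← Finset.sum_sub_distrib]
            refine le_trans (Finset.abs_sum_le_sum_abs _ _) ?_
            apply Finset.sum_le_sum
            intro t _
            rw [show μ t * W t z * R t u - μ t * W' t z * R t u =
              (μ t * R t u) * (W t z - W' t z) by ring, abs_mul,
              abs_of_nonneg (mul_nonneg (hμ0 t) (hR0 t u))]
        _ = ∑ t, μ t * R t u * ∑ z, |W t z - W' t z| := by
            rw [Finset.sum_comm]
            exact Finset.sum_congr rfl fun t _ => (Finset.mul_sum _ _ _).symm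
        _ ≤ ∑ t, μ t * R t u * ε := by
            apply Finset.sum_le_sum
            intro t _
            exact mul_le_mul_of_nonneg_left (hd t) (mul_nonneg (hμ0 t) (hR0 t u))
        _ = ε * m u := by rw [hm_def, ← Finset.sum_mul]; ring
  calc |(∑ u : U, ∑ z : Z, Real.negMulLog (∑ t, μ t * W t z * R t u))
      - ∑ u : U, ∑ z : Z, Real.negMulLog (∑ t, μ t * W' t z * R t u)|
      = |∑ u : U, ((∑ z : Z, Real.negMulLog (∑ t, μ t * W t z * R t u))
        - ∑ z : Z, Real.negMulLog (∑ t, μ t * W' t z * R t u))| := by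
        rw [Finset.sum_sub_distrib]
    _ ≤ ∑ u : U, |(∑ z : Z, Real.negMulLog (∑ t, μ t * W t z * R t u))
        - ∑ z : Z, Real.negMulLog (∑ t, μ t * W' t z * R t u)| :=
        Finset.abs_sum_le_sum_abs _ _
    _ ≤ ∑ u : U, m u * (2 * ε * Real.log (Fintype.card Z) + 2 * Real.binEntropy ε) :=
        Finset.sum_le_sum fun u _ => hper u
    _ = 2 * ε * Real.log (Fintype.card Z) + 2 * Real.binEntropy ε := by
        rw [← Finset.sum_mul, hmsum, one_mul]
end Aux2

noncomputable def outDist {X Z : Type*} [Fintype X] {n : ℕ}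
    (A : Fin n → X → Z → ℝ) (Q : (Fin n → X) → ℝ) : (Fin n → Z) → ℝ :=
  fun zn => ∑ xn, Q xn * ∏ i, A i (xn i) (zn i)

set_option maxHeartbeats 1000000
section Core
variable {X Z : Type*} [Fintype X] [Fintype Z]

lemma outDist_rewrite {n : ℕ} (A : Fin n → X → Z → ℝ) (Q : (Fin n → X) → ℝ) (k0 : Fin n) :
    entn (outDist A Q) = ∑ u : ({j : Fin n // j ≠ k0} → Z), ∑ z : Z,
      Real.negMulLog (∑ xn : Fin n → X, Q xn * A k0 (xn k0) z *
        ∏ j : {j : Fin n // j ≠ k0}, A j (xn j) (u j)) := by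
  rw [entn]
  rw [← Equiv.sum_comp (Equiv.funSplitAt k0 Z).symm
    (fun zn => Real.negMulLog (outDist A Q zn))]
  rw [Fintype.sum_prod_type, Finset.sum_comm]
  apply Finset.sum_congr rfl
  intro u _
  apply Finset.sum_congr rfl
  intro z _
  congr 1
  rw [outDist]
  apply Finset.sum_congr rfl
  intro xn _
  have hsplit : ∀ (g : Fin n → ℝ), ∏ i, g i = g k0 * ∏ j : {j : Fin n // j ≠ k0}, g j := by
    intro g
    rw [← Finset.mul_prod_erase Finset.univ g (Finset.mem_univ k0)]
    congr 1
    exact (Finset.prod_subtype (Finset.univ.erase k0) (p := fun j => j ≠ k0)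
      (fun x => by simp [Finset.mem_erase]) g)
  rw [hsplit]
  have hk0 : (Equiv.funSplitAt k0 Z).symm (z, u) k0 = z := by simp
  have hj : ∀ j : {j : Fin n // j ≠ k0}, (Equiv.funSplitAt k0 Z).symm (z, u) (j : Fin n) = u j := by
    intro j
    simp [Equiv.funSplitAt, Equiv.piSplitAt, j.2]
  rw [hk0]
  rw [Finset.prod_congr rfl (fun j _ => by rw [hj j])]
  ring

lemma core_bound {n : ℕ} {ε : ℝ} (hε0 : 0 < ε) (hε1 : ε < 1)
    (A B : Fin n → X → Z → ℝ) (hA : ∀ i, IsChannel (A i)) (hB : ∀ i, IsChannel (B i))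
    (hd : ∀ i x, ∑ z, |A i x z - B i x z| ≤ ε)
    (Q : (Fin n → X) → ℝ) (hQ : IsProb Q) :
    |entn (outDist A Q) - entn (outDist B Q)| ≤
      n * (2 * ε * Real.log (Fintype.card Z) + 2 * Real.binEntropy ε) := by
  classical
  set C := 2 * ε * Real.log (Fintype.card Z) + 2 * Real.binEntropy ε with hC_def
  set hyb : ℕ → Fin n → X → Z → ℝ := fun k i => if (i : ℕ) < k then B i else A i with hhyb_def
  have hhybA : hyb 0 = A := by
    funext i x z; rw [hhyb_def]; simp
  have hhybB : hyb n = B := by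
    funext i x z; rw [hhyb_def]; simp [i.isLt]
  have hhybChan : ∀ k i, IsChannel (hyb k i) := by
    intro k i
    rw [hhyb_def]; simp only []
    by_cases h : (i : ℕ) < k <;> simp [h, hA i, hB i]
  have hstep : ∀ k, k < n → |entn (outDist (hyb k) Q) - entn (outDist (hyb (k+1)) Q)| ≤ C := by
    intro k hk
    set k0 : Fin n := ⟨k, hk⟩ with hk0_def
    have hker : ∀ j : Fin n, j ≠ k0 → hyb (k+1) j = hyb k j := by
      intro j hj
      rw [hhyb_def]; simp only []
      have : (j : ℕ) ≠ k := by
        intro h; apply hj; apply Fin.ext; rw [h, hk0_def]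
      rcases Nat.lt_or_ge (j : ℕ) k with h | h
      · simp [h, Nat.lt_succ_of_lt h]
      · have h1 : ¬ (j : ℕ) < k := not_lt.mpr h
        have h2 : ¬ (j : ℕ) < k + 1 := by omega
        simp [h1, h2]
    have hkA : hyb k k0 = A k0 := by
      rw [hhyb_def]; simp only []
      simp [hk0_def]
    have hkB : hyb (k+1) k0 = B k0 := by
      rw [hhyb_def]; simp only []
      simp [hk0_def]
    have hRcongr : ∀ (xn : Fin n → X) (u : {j : Fin n // j ≠ k0} → Z),
        (∏ j : {j : Fin n // j ≠ k0}, hyb (k+1) (j : Fin n) (xn j) (u j)) =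
        ∏ j : {j : Fin n // j ≠ k0}, hyb k (j : Fin n) (xn j) (u j) := by
      intro xn u
      exact Finset.prod_congr rfl fun j _ => by rw [hker j j.2]
    have heq1 : entn (outDist (hyb k) Q) = ∑ u : ({j : Fin n // j ≠ k0} → Z), ∑ z : Z,
        Real.negMulLog (∑ xn : Fin n → X, Q xn * A k0 (xn k0) z *
          ∏ j : {j : Fin n // j ≠ k0}, hyb k (j : Fin n) (xn j) (u j)) := by
      rw [outDist_rewrite (hyb k) Q k0]
      simp only [hkA]
    have heq2 : entn (outDist (hyb (k+1)) Q) = ∑ u : ({j : Fin n // j ≠ k0} → Z), ∑ z : Z,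
        Real.negMulLog (∑ xn : Fin n → X, Q xn * B k0 (xn k0) z *
          ∏ j : {j : Fin n // j ≠ k0}, hyb k (j : Fin n) (xn j) (u j)) := by
      rw [outDist_rewrite (hyb (k+1)) Q k0]
      simp only [hkB]
      apply Finset.sum_congr rfl
      intro u _
      apply Finset.sum_congr rfl
      intro z _
      congr 1
      exact Finset.sum_congr rfl fun xn _ => by rw [hRcongr xn u]
    have hkey := step_lemma (U := {j : Fin n // j ≠ k0} → Z) hε0 hε1 Q hQ.1 hQ.2
      (fun xn u => ∏ j : {j : Fin n // j ≠ k0}, hyb k (j : Fin n) (xn j) (u j))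
      (fun xn u => Finset.prod_nonneg fun j _ => (hhybChan k j (xn j)).1 (u j))
      (fun xn => by
        rw [← Fintype.prod_sum (fun (j : {j : Fin n // j ≠ k0}) (z : Z) =>
          hyb k (j : Fin n) (xn j) z)]
        exact Finset.prod_eq_one fun j _ => (hhybChan k j (xn j)).2)
      (fun xn => A k0 (xn k0)) (fun xn => B k0 (xn k0))
      (fun xn => hA k0 (xn k0)) (fun xn => hB k0 (xn k0))
      (fun xn => hd k0 (xn k0))
    rw [heq1, heq2]
    exact hkey
  have htel : ∀ k, k ≤ n → |entn (outDist (hyb 0) Q) - entn (outDist (hyb k) Q)| ≤ k * C := by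
    intro k
    induction k with
    | zero => intro _; simp
    | succ k ih =>
      intro hk
      have h1 := ih (Nat.le_of_succ_le hk)
      have h2 := hstep k (Nat.lt_of_succ_le hk)
      calc |entn (outDist (hyb 0) Q) - entn (outDist (hyb (k+1)) Q)| ≤
          |entn (outDist (hyb 0) Q) - entn (outDist (hyb k) Q)| +
          |entn (outDist (hyb k) Q) - entn (outDist (hyb (k+1)) Q)| := abs_sub_le _ _ _
        _ ≤ k * C + C := add_le_add h1 h2
        _ = (k + 1 : ℕ) * C := by push_cast; ring
  have := htel n le_rfl
  rwa [hhybA, hhybB] at this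
end Core

section MI
variable {X Z S J : Type*} [Fintype X] [Fintype Z] [Fintype J] [Nonempty J]

lemma outDist_nonneg {n : ℕ} {A : Fin n → X → Z → ℝ} (hA : ∀ i, IsChannel (A i))
    {Q : (Fin n → X) → ℝ} (hQ : ∀ xn, 0 ≤ Q xn) (zn : Fin n → Z) :
    0 ≤ outDist A Q zn :=
  Finset.sum_nonneg fun xn _ => mul_nonneg (hQ xn)
    (Finset.prod_nonneg fun i _ => (hA i (xn i)).1 (zn i))

lemma outDist_sum {n : ℕ} {A : Fin n → X → Z → ℝ} (hA : ∀ i, IsChannel (A i))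
    {Q : (Fin n → X) → ℝ} (hQ : ∑ xn, Q xn = 1) :
    ∑ zn : Fin n → Z, outDist A Q zn = 1 := by
  simp only [outDist]
  rw [Finset.sum_comm]
  rw [Finset.sum_congr rfl fun xn _ => by
    rw [← Finset.mul_sum, ← Fintype.prod_sum (fun (i : Fin n) (z : Z) => A i (xn i) z),
      Finset.prod_eq_one fun i _ => (hA i (xn i)).2, mul_one]]
  exact hQ

lemma mutInf_jointAVC (n : ℕ) (V : S → X → Z → ℝ) (hV : ∀ s, IsChannel (V s)) (sn : Fin n → S)
    (E : J → (Fin n → X) → ℝ) (hE : ∀ j, IsProb (E j)) :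
    mutInf (jointAVC n V sn E) =
      ((∑ zn : Fin n → Z, Real.negMulLog
          (outDist (fun i => V (sn i)) (fun xn => (Fintype.card J : ℝ)⁻¹ * ∑ j, E j xn) zn))
        - ∑ j : J, (Fintype.card J : ℝ)⁻¹ *
          ∑ zn : Fin n → Z, Real.negMulLog (outDist (fun i => V (sn i)) (E j) zn))
        / Real.log 2 := by
  classical
  have hcpos : (0:ℝ) < (Fintype.card J : ℝ)⁻¹ := by
    have : 0 < Fintype.card J := Fintype.card_pos
    positivity
  set c : ℝ := (Fintype.card J : ℝ)⁻¹ with hc_def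
  set pj : J → (Fin n → Z) → ℝ :=
    fun j zn => ∑ xn, (∏ i, V (sn i) (xn i) (zn i)) * E j xn with hpj_def
  have hpj0 : ∀ j zn, 0 ≤ pj j zn := fun j zn =>
    Finset.sum_nonneg fun xn _ => mul_nonneg
      (Finset.prod_nonneg fun i _ => (hV (sn i) (xn i)).1 (zn i)) ((hE j).1 xn)
  have hout_j : ∀ j, outDist (fun i => V (sn i)) (E j) = pj j := by
    intro j; funext zn
    simp only [outDist, hpj_def]
    exact Finset.sum_congr rfl fun xn _ => mul_comm _ _
  have hpjs : ∀ j, ∑ zn, pj j zn = 1 := by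
    intro j
    rw [← hout_j j]
    exact outDist_sum (fun i => hV (sn i)) (hE j).2
  have hout_bar : ∀ zn, outDist (fun i => V (sn i)) (fun xn => c * ∑ j, E j xn) zn
      = c * ∑ j, pj j zn := by
    intro zn
    simp only [outDist]
    calc ∑ xn, (c * ∑ j, E j xn) * ∏ i, V (sn i) (xn i) (zn i)
        = c * ∑ xn, ∑ j, E j xn * ∏ i, V (sn i) (xn i) (zn i) := by
          rw [Finset.mul_sum]
          exact Finset.sum_congr rfl fun xn _ => by rw [← Finset.sum_mul]; ring
      _ = c * ∑ j, pj j zn := by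
          rw [Finset.sum_comm]
          congr 1
          exact Finset.sum_congr rfl fun j _ => Finset.sum_congr rfl fun xn _ => mul_comm _ _
  have hJ : ∀ j zn, jointAVC n V sn E (j, zn) = c * pj j zn := fun j zn => rfl
  have hmarg1 : ∀ j, ∑ zn : Fin n → Z, jointAVC n V sn E (j, zn) = c := by
    intro j
    rw [Finset.sum_congr rfl fun zn _ => hJ j zn, ← Finset.mul_sum, hpjs j, mul_one]
  have hmarg2 : ∀ zn, ∑ j' : J, jointAVC n V sn E (j', zn) = c * ∑ j', pj j' zn := by
    intro zn
    rw [Finset.sum_congr rfl fun j' _ => hJ j' zn, ← Finset.mul_sum]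
  have hterm : ∀ j zn, jointAVC n V sn E (j, zn) * Real.logb 2 (jointAVC n V sn E (j, zn) /
      ((∑ zn' : Fin n → Z, jointAVC n V sn E (j, zn')) * ∑ j' : J, jointAVC n V sn E (j', zn)))
      = (c * (pj j zn * Real.log (pj j zn))
          - c * (pj j zn * Real.log (c * ∑ j', pj j' zn))) / Real.log 2 := by
    intro j zn
    rw [hJ j zn, hmarg1 j, hmarg2 zn]
    by_cases h : pj j zn = 0
    · simp [h]
    · have hpos : 0 < pj j zn := lt_of_le_of_ne (hpj0 j zn) (Ne.symm h)
      have hbar : 0 < ∑ j', pj j' zn :=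
        lt_of_lt_of_le hpos (Finset.single_le_sum (fun j' _ => hpj0 j' zn) (Finset.mem_univ j))
      have hratio : c * pj j zn / (c * (c * ∑ j', pj j' zn))
          = pj j zn / (c * ∑ j', pj j' zn) := by
        rw [mul_div_mul_left _ _ (ne_of_gt hcpos)]
      rw [hratio, Real.logb, Real.log_div (ne_of_gt hpos) (by positivity)]
      field_simp
  rw [mutInf]
  rw [Finset.sum_congr rfl fun j (_ : j ∈ Finset.univ) =>
    Finset.sum_congr rfl fun zn (_ : zn ∈ Finset.univ) => hterm j zn]
  have hsplit : ∑ j : J, ∑ zn : Fin n → Z,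
      (c * (pj j zn * Real.log (pj j zn)) - c * (pj j zn * Real.log (c * ∑ j', pj j' zn)))
        / Real.log 2
      = ((∑ zn : Fin n → Z, Real.negMulLog (c * ∑ j', pj j' zn))
        - ∑ j : J, c * ∑ zn : Fin n → Z, Real.negMulLog (pj j zn)) / Real.log 2 := by
    have e1 : ∀ j, ∑ zn : Fin n → Z,
        (c * (pj j zn * Real.log (pj j zn)) - c * (pj j zn * Real.log (c * ∑ j', pj j' zn)))
          / Real.log 2
        = (- (c * ∑ zn : Fin n → Z, Real.negMulLog (pj j zn))
          - ∑ zn : Fin n → Z, c * (pj j zn * Real.log (c * ∑ j', pj j' zn))) / Real.log 2 := by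
      intro j
      rw [← Finset.sum_div]
      congr 1
      rw [Finset.sum_sub_distrib]
      congr 1
      rw [Finset.mul_sum, ← Finset.sum_neg_distrib]
      exact Finset.sum_congr rfl fun zn _ => by rw [Real.negMulLog]; ring
    rw [Finset.sum_congr rfl fun j (_ : j ∈ Finset.univ) => e1 j]
    rw [← Finset.sum_div]
    congr 1
    rw [Finset.sum_sub_distrib, Finset.sum_neg_distrib]
    have e2 : ∑ j : J, ∑ zn : Fin n → Z, c * (pj j zn * Real.log (c * ∑ j', pj j' zn))
        = - ∑ zn : Fin n → Z, Real.negMulLog (c * ∑ j', pj j' zn) := by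
      rw [Finset.sum_comm, ← Finset.sum_neg_distrib]
      apply Finset.sum_congr rfl
      intro zn _
      rw [Real.negMulLog]
      have : ∑ j : J, c * (pj j zn * Real.log (c * ∑ j', pj j' zn))
          = (c * ∑ j, pj j zn) * Real.log (c * ∑ j', pj j' zn) := by
        rw [Finset.mul_sum, Finset.sum_mul]
        exact Finset.sum_congr rfl fun j _ => by ring
      rw [this]
      ring
    rw [e2]
    ring
  rw [hsplit]
  congr 2
  · exact (Finset.sum_congr rfl fun zn _ => by rw [hout_bar zn]).symm
  · exact (Finset.sum_congr rfl fun j _ => by rw [hout_j j]).symm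
end MI

/-- robustness of the weak-secrecy information leakage of a common-randomness
assisted code under perturbation of the eavesdropper AVC. -/
theorem weak_secrecy_robustness_CR {X Z S S' : Type*}
    [Fintype X] [Fintype Z] [Fintype S] [Fintype S'] [Nonempty S] [Nonempty S']
    {ε : ℝ} (hε : ε ∈ Set.Ioo (0 : ℝ) 1)
    (V : S → X → Z → ℝ) (V' : S' → X → Z → ℝ)
    (hV : ∀ s, IsChannel (V s)) (hV' : ∀ s, IsChannel (V' s))
    (hD : Davc V V' ≤ ε)
    (n : ℕ) {J : Type*} [Fintype J] [Nonempty J]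
    {G : Type*} [Fintype G] (PΓ : G → ℝ) (hPΓ : IsProb PΓ)
    (E : G → J → (Fin n → X) → ℝ)
    (hE : ∀ γ j, (∀ xn, 0 ≤ E γ j xn) ∧ ∑ xn : Fin n → X, E γ j xn = 1)
    (δn : ℝ)
    (hδ : (⨆ sn : Fin n → S,
        (1 / (n : ℝ)) * ∑ γ : G, PΓ γ * mutInf (jointAVC n V sn (E γ))) = δn) :
    (⨆ sn : Fin n → S',
        (1 / (n : ℝ)) * ∑ γ : G, PΓ γ * mutInf (jointAVC n V' sn (E γ))) ≤
      δn + 4 * ε * Real.logb 2 (Fintype.card Z) + 4 * H2 ε := by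
  classical
  have hε0 := hε.1
  have hε1 := hε.2
  have hlog2pos : (0:ℝ) < Real.log 2 := Real.log_pos one_lt_two
  have hH2 : H2 ε = Real.binEntropy ε / Real.log 2 := by
    rw [H2, Real.binEntropy, Real.logb, Real.logb, Real.log_inv, Real.log_inv]
    ring
  have hlogbZ : Real.logb 2 (Fintype.card Z) = Real.log (Fintype.card Z) / Real.log 2 := by
    rw [Real.logb]
  have hlogZ0 : 0 ≤ Real.log (Fintype.card Z) := by
    rcases Nat.eq_zero_or_pos (Fintype.card Z) with h | h
    · simp [h]
    · apply Real.log_nonneg; exact_mod_cast h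
  have hbin0 : 0 ≤ Real.binEntropy ε := Real.binEntropy_nonneg hε0.le hε1.le
  have hB'0 : 0 ≤ 4 * ε * Real.logb 2 (Fintype.card Z) + 4 * H2 ε := by
    rw [hlogbZ, hH2]
    positivity
  apply ciSup_le
  intro s'n
  -- choose a close state sequence for V
  have hchoice : ∀ s' : S', ∃ s : S, dChan (V s) (V' s') ≤ ε := by
    intro s'
    have h1 : (⨆ s₂ : S', ⨅ s₁ : S, dChan (V s₁) (V' s₂)) ≤ ε :=
      le_trans (le_max_left _ _) hD
    have h2 : (⨅ s₁ : S, dChan (V s₁) (V' s')) ≤ ε := by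
      refine le_trans ?_ h1
      exact le_ciSup (f := fun s₂ : S' => ⨅ s₁ : S, dChan (V s₁) (V' s₂))
        ((Set.finite_range _).bddAbove) s'
    obtain ⟨s, hs⟩ := exists_eq_ciInf_of_finite (f := fun s₁ : S => dChan (V s₁) (V' s'))
    exact ⟨s, le_trans (le_of_eq hs) h2⟩
  choose sf hsf using hchoice
  set sn : Fin n → S := fun i => sf (s'n i) with hsn_def
  have hrow : ∀ (i : Fin n) (x : X), ∑ z, |V (sn i) x z - V' (s'n i) x z| ≤ ε := by
    intro i x
    refine le_trans ?_ (hsf (s'n i))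
    exact le_ciSup (f := fun x : X => ∑ z, |V (sf (s'n i)) x z - V' (s'n i) x z|)
      ((Set.finite_range _).bddAbove) x
  have hEγ : ∀ γ j, IsProb (E γ j) := fun γ j => ⟨(hE γ j).1, (hE γ j).2⟩
  have hcJpos : (0:ℝ) < (Fintype.card J : ℝ) := by
    exact_mod_cast Fintype.card_pos
  set Cn : ℝ := (n : ℝ) * (2 * ε * Real.log (Fintype.card Z) + 2 * Real.binEntropy ε)
    with hCn_def
  have hBeq : (n : ℝ) * (4 * ε * Real.logb 2 (Fintype.card Z) + 4 * H2 ε)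
      = 2 * Cn / Real.log 2 := by
    rw [hCn_def, hlogbZ, hH2]
    field_simp
    ring
  have hper : ∀ γ : G, mutInf (jointAVC n V' s'n (E γ)) - mutInf (jointAVC n V sn (E γ))
      ≤ (n : ℝ) * (4 * ε * Real.logb 2 (Fintype.card Z) + 4 * H2 ε) := by
    intro γ
    rw [mutInf_jointAVC n V hV sn (E γ) (hEγ γ), mutInf_jointAVC n V' hV' s'n (E γ) (hEγ γ)]
    set QB : (Fin n → X) → ℝ := fun xn => (Fintype.card J : ℝ)⁻¹ * ∑ j, E γ j xn with hQB_def
    have hQBprob : IsProb QB := by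
      constructor
      · intro xn
        exact mul_nonneg (by positivity) (Finset.sum_nonneg fun j _ => (hE γ j).1 xn)
      · rw [hQB_def]
        simp only []
        rw [← Finset.mul_sum, Finset.sum_comm]
        rw [Finset.sum_congr rfl fun j (_ : j ∈ Finset.univ) => (hE γ j).2]
        simp [mul_comm]
    have h1 := core_bound hε0 hε1 (fun i => V (sn i)) (fun i => V' (s'n i))
      (fun i => hV (sn i)) (fun i => hV' (s'n i)) hrow QB hQBprob
    have h2 : ∀ j, |entn (outDist (fun i => V (sn i)) (E γ j))
        - entn (outDist (fun i => V' (s'n i)) (E γ j))| ≤ Cn := fun j =>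
      core_bound hε0 hε1 (fun i => V (sn i)) (fun i => V' (s'n i))
        (fun i => hV (sn i)) (fun i => hV' (s'n i)) hrow (E γ j) (hEγ γ j)
    have hT : (∑ j : J, (Fintype.card J : ℝ)⁻¹ *
          ∑ zn : Fin n → Z, Real.negMulLog (outDist (fun i => V (sn i)) (E γ j) zn))
        - (∑ j : J, (Fintype.card J : ℝ)⁻¹ *
          ∑ zn : Fin n → Z, Real.negMulLog (outDist (fun i => V' (s'n i)) (E γ j) zn))
        ≤ Cn := by
      rw [← Finset.sum_sub_distrib]
      calc ∑ j : J, ((Fintype.card J : ℝ)⁻¹ *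
            ∑ zn : Fin n → Z, Real.negMulLog (outDist (fun i => V (sn i)) (E γ j) zn)
          - (Fintype.card J : ℝ)⁻¹ *
            ∑ zn : Fin n → Z, Real.negMulLog (outDist (fun i => V' (s'n i)) (E γ j) zn))
          ≤ ∑ _j : J, (Fintype.card J : ℝ)⁻¹ * Cn := by
            apply Finset.sum_le_sum
            intro j _
            rw [← mul_sub]
            refine mul_le_mul_of_nonneg_left ?_ (by positivity)
            exact le_trans (le_abs_self _) (h2 j)
        _ = Cn := by
            rw [Finset.sum_const, Finset.card_univ, nsmul_eq_mul]
            field_simp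
    have hS : (∑ zn : Fin n → Z, Real.negMulLog (outDist (fun i => V' (s'n i)) QB zn))
        - (∑ zn : Fin n → Z, Real.negMulLog (outDist (fun i => V (sn i)) QB zn)) ≤ Cn := by
      have := (abs_le.mp h1).1
      have heq1 : entn (outDist (fun i => V (sn i)) QB)
          = ∑ zn : Fin n → Z, Real.negMulLog (outDist (fun i => V (sn i)) QB zn) := rfl
      have heq2 : entn (outDist (fun i => V' (s'n i)) QB)
          = ∑ zn : Fin n → Z, Real.negMulLog (outDist (fun i => V' (s'n i)) QB zn) := rfl
      rw [heq1, heq2] at this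
      linarith
    rw [hBeq, div_sub_div_same]
    have hin : ((∑ zn : Fin n → Z, Real.negMulLog (outDist (fun i => V' (s'n i)) QB zn))
        - ∑ j : J, (Fintype.card J : ℝ)⁻¹ *
          ∑ zn : Fin n → Z, Real.negMulLog (outDist (fun i => V' (s'n i)) (E γ j) zn))
        - ((∑ zn : Fin n → Z, Real.negMulLog (outDist (fun i => V (sn i)) QB zn))
        - ∑ j : J, (Fintype.card J : ℝ)⁻¹ *
          ∑ zn : Fin n → Z, Real.negMulLog (outDist (fun i => V (sn i)) (E γ j) zn))
        ≤ 2 * Cn := by linarith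
    gcongr
  -- average over the common randomness
  have havg : ∑ γ : G, PΓ γ * mutInf (jointAVC n V' s'n (E γ)) ≤
      (∑ γ : G, PΓ γ * mutInf (jointAVC n V sn (E γ)))
        + (n : ℝ) * (4 * ε * Real.logb 2 (Fintype.card Z) + 4 * H2 ε) := by
    calc ∑ γ : G, PΓ γ * mutInf (jointAVC n V' s'n (E γ))
        ≤ ∑ γ : G, PΓ γ * (mutInf (jointAVC n V sn (E γ))
            + (n : ℝ) * (4 * ε * Real.logb 2 (Fintype.card Z) + 4 * H2 ε)) := by
          apply Finset.sum_le_sum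
          intro γ _
          refine mul_le_mul_of_nonneg_left ?_ (hPΓ.1 γ)
          linarith [hper γ]
      _ = _ := by
          rw [Finset.sum_congr rfl fun γ (_ : γ ∈ Finset.univ) => mul_add (PΓ γ) _ _,
            Finset.sum_add_distrib, ← Finset.sum_mul, hPΓ.2, one_mul]
  rcases Nat.eq_zero_or_pos n with hn | hn
  · -- n = 0 : both sides are suprema of 0
    subst hn
    have hzero : (1 / ((0:ℕ) : ℝ)) = 0 := by norm_num
    have hδ0 : δn = 0 := by
      rw [← hδ]
      have : ∀ sn0 : Fin 0 → S,
          (1 / ((0:ℕ) : ℝ)) * ∑ γ : G, PΓ γ * mutInf (jointAVC 0 V sn0 (E γ)) = 0 := by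
        intro sn0; rw [hzero, zero_mul]
      rw [show (fun sn0 : Fin 0 → S =>
          (1 / ((0:ℕ) : ℝ)) * ∑ γ : G, PΓ γ * mutInf (jointAVC 0 V sn0 (E γ)))
          = fun _ => (0:ℝ) from funext this]
      exact ciSup_const
    rw [hzero, zero_mul, hδ0, zero_add]
    exact hB'0
  · have hnpos : (0:ℝ) < (n : ℝ) := by exact_mod_cast hn
    have hVle : (1 / (n : ℝ)) * ∑ γ : G, PΓ γ * mutInf (jointAVC n V sn (E γ)) ≤ δn := by
      rw [← hδ]
      exact le_ciSup (f := fun sn0 : Fin n → S =>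
        (1 / (n : ℝ)) * ∑ γ : G, PΓ γ * mutInf (jointAVC n V sn0 (E γ)))
        ((Set.finite_range _).bddAbove) sn
    have hfinal : (1 / (n : ℝ)) * ∑ γ : G, PΓ γ * mutInf (jointAVC n V' s'n (E γ))
        ≤ (1 / (n : ℝ)) * ∑ γ : G, PΓ γ * mutInf (jointAVC n V sn (E γ))
          + (4 * ε * Real.logb 2 (Fintype.card Z) + 4 * H2 ε) := by
      calc (1 / (n : ℝ)) * ∑ γ : G, PΓ γ * mutInf (jointAVC n V' s'n (E γ))
          ≤ (1 / (n : ℝ)) * ((∑ γ : G, PΓ γ * mutInf (jointAVC n V sn (E γ)))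
            + (n : ℝ) * (4 * ε * Real.logb 2 (Fintype.card Z) + 4 * H2 ε)) := by
            exact mul_le_mul_of_nonneg_left havg (by positivity)
        _ = _ := by field_simp
    linarith [hfinal, hVle]
end

section
/- Let W* = {W₁*, W₂*} be the AVC with input alphabet X = {1,2}, output alphabet Y = {1,2,3} and state set {1,2}, where W₁*(·|1)=(1/2,1/2,0), W₁*(·|2)=(1/4,0,3/4), W₂*(·|1)=(0,0,1), W₂*(·|2)=(0,1,0). Then there exists ε₁ > 0 such that every AVC W = {W(·|·,s)}_{s∈S} with input alphabet X, output alphabet Y, finite state set S, and D(W*,W) < ε₁ is symmetrizable. -/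
open Real Finset

/-- An AVC `W = {W(·|·,s)}_{s∈S}` is symmetrizable: there is a stochastic matrix
`σ : X → P(S)` with `∑_s W(y|x₁,s)σ(s|x₂) = ∑_s W(y|x₂,s)σ(s|x₁)` for all `x₁,x₂,y`. -/
def Symmetrizable {X Y S : Type*} [Fintype Y] [Fintype S] (W : S → X → Y → ℝ) : Prop :=
  ∃ σ : X → S → ℝ, IsChannel σ ∧
    ∀ x₁ x₂ y, (∑ s : S, W s x₁ y * σ x₂ s) = ∑ s : S, W s x₂ y * σ x₁ s

/-- The AVC `W* = {W₁*, W₂*}`: state `s` (first index), input `x`, output `y`. -/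
noncomputable def Wstar : Fin 2 → Fin 2 → Fin 3 → ℝ :=
  ![![![1 / 2, 1 / 2, 0], ![1 / 4, 0, 3 / 4]], ![![0, 0, 1], ![0, 1, 0]]]

private lemma abs3_first {x y z ε : ℝ} (h : |x| + |y| + |z| < ε) : |x| < ε := by
  have hy := abs_nonneg y; have hz := abs_nonneg z; linarith

private lemma abs3_second {x y z ε : ℝ} (h : |x| + |y| + |z| < ε) : |y| < ε := by
  have hx := abs_nonneg x; have hz := abs_nonneg z; linarith

private lemma two_point_sum {S : Type*} [Fintype S] [DecidableEq S] (f : S → ℝ)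
    (c : ℝ) (t1 t2 : S) :
    ∑ s, f s * (c * (if s = t1 then (1:ℝ) else 0) + (1 - c) * (if s = t2 then 1 else 0))
      = c * f t1 + (1 - c) * f t2 := by
  have h : ∀ s, f s * (c * (if s = t1 then (1:ℝ) else 0) + (1 - c) * (if s = t2 then 1 else 0))
      = (if s = t1 then c * f s else 0) + (if s = t2 then (1 - c) * f s else 0) := by
    intro s; split_ifs <;> ring
  simp only [h, Finset.sum_add_distrib, Finset.sum_ite_eq', Finset.mem_univ, if_true]

set_option maxHeartbeats 1600000 in
/-- every AVC in a sufficiently small `D`-neighborhood of `W*` (with an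
arbitrary finite state set) is symmetrizable. -/
theorem Wstar_neighborhood_symmetrizable :
    ∃ ε₁ > (0 : ℝ), ∀ (S : Type*) [Fintype S] [Nonempty S]
      (W : S → Fin 2 → Fin 3 → ℝ),
      (∀ s, IsChannel (W s)) → Davc Wstar W < ε₁ → Symmetrizable W := by
  classical
  refine ⟨1/100, by norm_num, ?_⟩
  intro S _ _ W hW hD
  have hbdd2 : ∀ (f : Fin 2 → ℝ), BddAbove (Set.range f) :=
    fun f => (Set.finite_range f).bddAbove
  have hD2 : (⨆ s₁ : Fin 2, ⨅ s₂ : S, dChan (Wstar s₁) (W s₂)) < 1/100 :=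
    lt_of_le_of_lt (le_max_right _ _) (by simpa [Davc] using hD)
  have hinf : ∀ i : Fin 2, (⨅ s : S, dChan (Wstar i) (W s)) < 1/100 :=
    fun i => lt_of_le_of_lt (le_ciSup (hbdd2 fun j : Fin 2 => ⨅ s : S, dChan (Wstar j) (W s)) i) hD2
  obtain ⟨t1, ht1m⟩ := Finite.exists_min (fun s : S => dChan (Wstar 0) (W s))
  obtain ⟨t2, ht2m⟩ := Finite.exists_min (fun s : S => dChan (Wstar 1) (W s))
  have ht1 : dChan (Wstar 0) (W t1) < 1/100 := lt_of_le_of_lt (le_ciInf ht1m) (hinf 0)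
  have ht2 : dChan (Wstar 1) (W t2) < 1/100 := lt_of_le_of_lt (le_ciInf ht2m) (hinf 1)
  have hrow : ∀ (i : Fin 2) (t : S), dChan (Wstar i) (W t) < 1/100 →
      ∀ x : Fin 2, |Wstar i x 0 - W t x 0| + |Wstar i x 1 - W t x 1|
        + |Wstar i x 2 - W t x 2| < 1/100 := by
    intro i t h x
    have h' : (⨆ x : Fin 2, ∑ y : Fin 3, |Wstar i x y - W t x y|) < 1/100 := by
      simpa [dChan] using h
    have h2 := lt_of_le_of_lt
      (le_ciSup (hbdd2 fun x => ∑ y : Fin 3, |Wstar i x y - W t x y|) x) h'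
    simpa [Fin.sum_univ_three] using h2
  have w000 : Wstar 0 0 0 = 1/2 := by norm_num [Wstar]
  have w001 : Wstar 0 0 1 = 1/2 := by norm_num [Wstar]
  have w010 : Wstar 0 1 0 = 1/4 := by norm_num [Wstar]
  have w011 : Wstar 0 1 1 = 0 := by norm_num [Wstar]
  have w100 : Wstar 1 0 0 = 0 := by norm_num [Wstar]
  have w101 : Wstar 1 0 1 = 0 := by norm_num [Wstar]
  have w110 : Wstar 1 1 0 = 0 := by norm_num [Wstar]
  have w111 : Wstar 1 1 1 = 1 := by norm_num [Wstar]
  have hA0 : 49/100 < W t1 0 0 ∧ W t1 0 0 < 51/100 := by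
    obtain ⟨l, r⟩ := abs_lt.mp (abs3_first (hrow 0 t1 ht1 0))
    rw [w000] at l r; constructor <;> linarith
  have hA1 : 49/100 < W t1 0 1 ∧ W t1 0 1 < 51/100 := by
    obtain ⟨l, r⟩ := abs_lt.mp (abs3_second (hrow 0 t1 ht1 0))
    rw [w001] at l r; constructor <;> linarith
  have hC0 : 24/100 < W t1 1 0 ∧ W t1 1 0 < 26/100 := by
    obtain ⟨l, r⟩ := abs_lt.mp (abs3_first (hrow 0 t1 ht1 1))
    rw [w010] at l r; constructor <;> linarith
  have hC1 : -(1/100) < W t1 1 1 ∧ W t1 1 1 < 1/100 := by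
    obtain ⟨l, r⟩ := abs_lt.mp (abs3_second (hrow 0 t1 ht1 1))
    rw [w011] at l r; constructor <;> linarith
  have hB0 : -(1/100) < W t2 0 0 ∧ W t2 0 0 < 1/100 := by
    obtain ⟨l, r⟩ := abs_lt.mp (abs3_first (hrow 1 t2 ht2 0))
    rw [w100] at l r; constructor <;> linarith
  have hB1 : -(1/100) < W t2 0 1 ∧ W t2 0 1 < 1/100 := by
    obtain ⟨l, r⟩ := abs_lt.mp (abs3_second (hrow 1 t2 ht2 0))
    rw [w101] at l r; constructor <;> linarith
  have hD0 : -(1/100) < W t2 1 0 ∧ W t2 1 0 < 1/100 := by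
    obtain ⟨l, r⟩ := abs_lt.mp (abs3_first (hrow 1 t2 ht2 1))
    rw [w110] at l r; constructor <;> linarith
  have hD1 : 99/100 < W t2 1 1 ∧ W t2 1 1 < 101/100 := by
    obtain ⟨l, r⟩ := abs_lt.mp (abs3_second (hrow 1 t2 ht2 1))
    rw [w111] at l r; constructor <;> linarith
  set A0 := W t1 0 0 with hA0d
  set A1 := W t1 0 1 with hA1d
  set B0 := W t2 0 0 with hB0d
  set B1 := W t2 0 1 with hB1d
  set C0 := W t1 1 0 with hC0d
  set C1 := W t1 1 1 with hC1d
  set D0 := W t2 1 0 with hD0d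
  set D1 := W t2 1 1 with hD1d
  clear_value A0 A1 B0 B1 C0 C1 D0 D1
  have hq1 : 23/100 < C0 - D0 := by linarith [hC0.1, hD0.2]
  have hq2 : C0 - D0 < 27/100 := by linarith [hC0.2, hD0.1]
  have hp1 : 48/100 < A0 - B0 := by linarith [hA0.1, hB0.2]
  have hp2 : A0 - B0 < 52/100 := by linarith [hA0.2, hB0.1]
  have hr1 : 48/100 < A1 - B1 := by linarith [hA1.1, hB1.2]
  have hr2 : A1 - B1 < 52/100 := by linarith [hA1.2, hB1.1]
  have hty1 : -(102/100) < C1 - D1 := by linarith [hC1.1, hD1.2]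
  have hty2 : C1 - D1 < -(98/100) := by linarith [hC1.2, hD1.1]
  have hu1 : -(2/100) < D0 - B0 := by linarith [hD0.1, hB0.2]
  have hu2 : D0 - B0 < 2/100 := by linarith [hD0.2, hB0.1]
  have hv1 : 98/100 < D1 - B1 := by linarith [hD1.1, hB1.2]
  have hv2 : D1 - B1 < 102/100 := by linarith [hD1.2, hB1.1]
  have P1 : 11/100 < (C0 - D0) * (A1 - B1) := by nlinarith only [hq1, hr1]
  have P2 : (A0 - B0) * (C1 - D1) ≤ -(47/100) := by nlinarith only [hp1, hty2]
  have hDpos : 58/100 < (C0 - D0) * (A1 - B1) - (A0 - B0) * (C1 - D1) := by linarith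
  have hDne : (C0 - D0) * (A1 - B1) - (A0 - B0) * (C1 - D1) ≠ 0 := by
    intro h; rw [h] at hDpos; norm_num at hDpos
  set b := ((C0 - D0) * (D1 - B1) - (D0 - B0) * (C1 - D1))
      / ((C0 - D0) * (A1 - B1) - (A0 - B0) * (C1 - D1)) with hbd
  set a := ((A0 - B0) * (D1 - B1) - (A1 - B1) * (D0 - B0))
      / ((C0 - D0) * (A1 - B1) - (A0 - B0) * (C1 - D1)) with had
  clear_value b a
  have P3a : 22/100 < (C0 - D0) * (D1 - B1) := by nlinarith only [hq1, hv1]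
  have P3b : (C0 - D0) * (D1 - B1) < 28/100 := by nlinarith only [hq1, hq2, hv1, hv2]
  have P4a : -(21/1000) < (D0 - B0) * (C1 - D1) := by nlinarith only [hu1, hu2, hty1, hty2]
  have P4b : (D0 - B0) * (C1 - D1) < 21/1000 := by nlinarith only [hu1, hu2, hty1, hty2]
  have P5a : 46/100 < (A0 - B0) * (D1 - B1) := by nlinarith only [hp1, hv1]
  have P5b : (A0 - B0) * (D1 - B1) < 54/100 := by nlinarith only [hp1, hp2, hv1, hv2]
  have P6a : -(11/1000) < (A1 - B1) * (D0 - B0) := by nlinarith only [hr1, hr2, hu1, hu2]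
  have P6b : (A1 - B1) * (D0 - B0) < 11/1000 := by nlinarith only [hr1, hr2, hu1, hu2]
  have hb0 : 0 ≤ b := by
    rw [hbd]; apply div_nonneg <;> linarith
  have hb1 : b ≤ 1 := by
    rw [hbd, div_le_one (by linarith)]; linarith
  have ha0 : 0 ≤ a := by
    rw [had]; apply div_nonneg <;> linarith
  have ha1 : a ≤ 1 := by
    rw [had, div_le_one (by linarith)]; linarith
  have eq0 : b * (A0 - B0) - a * (C0 - D0) = D0 - B0 := by
    rw [hbd, had, div_mul_eq_mul_div, div_mul_eq_mul_div, div_sub_div_same, div_eq_iff hDne]; ring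
  have eq1 : b * (A1 - B1) - a * (C1 - D1) = D1 - B1 := by
    rw [hbd, had, div_mul_eq_mul_div, div_mul_eq_mul_div, div_sub_div_same, div_eq_iff hDne]; ring
  have sA : A0 + A1 + W t1 0 2 = 1 := by
    have h := ((hW t1) 0).2; rw [Fin.sum_univ_three] at h; linarith
  have sB : B0 + B1 + W t2 0 2 = 1 := by
    have h := ((hW t2) 0).2; rw [Fin.sum_univ_three] at h; linarith
  have sC : C0 + C1 + W t1 1 2 = 1 := by
    have h := ((hW t1) 1).2; rw [Fin.sum_univ_three] at h; linarith
  have sD : D0 + D1 + W t2 1 2 = 1 := by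
    have h := ((hW t2) 1).2; rw [Fin.sum_univ_three] at h; linarith
  have E0 : b * A0 + (1 - b) * B0 = a * C0 + (1 - a) * D0 := by linear_combination eq0
  have E1 : b * A1 + (1 - b) * B1 = a * C1 + (1 - a) * D1 := by linear_combination eq1
  have E2 : b * W t1 0 2 + (1 - b) * W t2 0 2 = a * W t1 1 2 + (1 - a) * W t2 1 2 := by
    linear_combination b * sA + (1 - b) * sB - a * sC - (1 - a) * sD - eq0 - eq1
  rw [hA0d, hB0d, hC0d, hD0d] at E0
  rw [hA1d, hB1d, hC1d, hD1d] at E1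
  have E : ∀ y : Fin 3, b * W t1 0 y + (1 - b) * W t2 0 y
      = a * W t1 1 y + (1 - a) * W t2 1 y := by
    intro y; fin_cases y
    · exact E0
    · exact E1
    · exact E2
  refine ⟨fun x s => (if x = 0 then a else b) * (if s = t1 then 1 else 0)
      + (1 - (if x = 0 then a else b)) * (if s = t2 then 1 else 0), ?_, ?_⟩
  · intro x
    constructor
    · intro s
      dsimp only
      split_ifs <;> linarith only [ha0, ha1, hb0, hb1]
    · dsimp only
      rw [Finset.sum_add_distrib, ← Finset.mul_sum, ← Finset.mul_sum]
      simp only [Finset.sum_ite_eq', Finset.mem_univ, if_true, mul_one]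
      ring
  · intro x1 x2 y
    dsimp only
    rw [two_point_sum (fun s => W s x1 y), two_point_sum (fun s => W s x2 y)]
    by_cases h1 : x1 = 0 <;> by_cases h2 : x2 = 0
    · subst h1; subst h2; rfl
    · have h2' : x2 = 1 := by omega
      subst h1; subst h2'
      simpa using E y
    · have h1' : x1 = 1 := by omega
      subst h1'; subst h2
      simpa using (E y).symm
    · have h1' : x1 = 1 := by omega
      have h2' : x2 = 1 := by omega
      subst h1'; subst h2'; rfl
end

section
/- Let W = {W(·|·,s)}_{s∈S} be a non-symmetrizable AVC with finite alphabets X, Y and finite state set S. Then there exists ε > 0 such that every AVC W' = {W'(·|·,s')}_{s'∈S'} over the same alphabets with finite state set S' and D(W,W') < ε is also non-symmetrizable. -/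
open Real Finset

/-- non-symmetrizability is stable: every AVC in a sufficiently small
`D`-neighborhood of a non-symmetrizable AVC is itself non-symmetrizable. -/
theorem nonsymmetrizable_stability {X Y S : Type*}
    [Fintype X] [Fintype Y] [Fintype S] [Nonempty X] [Nonempty S]
    (W : S → X → Y → ℝ) (hW : ∀ s, IsChannel (W s))
    (hns : ¬ Symmetrizable W) :
    ∃ ε > (0 : ℝ), ∀ (S' : Type*) [Fintype S'] [Nonempty S']
      (W' : S' → X → Y → ℝ),
      (∀ s', IsChannel (W' s')) → Davc W W' < ε → ¬ Symmetrizable W' := by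

  classical
  set f : (X → S → ℝ) → ℝ := fun σ => Fsym σ σ W with hf
  set K : Set (X → S → ℝ) := {σ | IsChannel σ} with hKdef
  -- K is closed
  have hKclosed : IsClosed K := by
    have hKeq : K = (⋂ x, ⋂ s, {σ : X → S → ℝ | 0 ≤ σ x s}) ∩
        ⋂ x, {σ : X → S → ℝ | ∑ s, σ x s = 1} := by
      ext σ
      simp only [hKdef, Set.mem_setOf_eq, Set.mem_inter_iff, Set.mem_iInter, IsChannel]
      constructor
      · intro h; exact ⟨fun x s => (h x).1 s, fun x => (h x).2⟩
      · intro h x; exact ⟨fun s => h.1 x s, h.2 x⟩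
    rw [hKeq]
    refine IsClosed.inter (isClosed_iInter fun x => isClosed_iInter fun s => ?_)
      (isClosed_iInter fun x => ?_)
    · exact isClosed_le continuous_const ((continuous_apply s).comp (continuous_apply x))
    · exact isClosed_eq (continuous_finset_sum _ fun s _ =>
        (continuous_apply s).comp (continuous_apply x)) continuous_const
  -- K is bounded
  have hKbdd : Bornology.IsBounded K := by
    apply (Metric.isBounded_closedBall (x := (0 : X → S → ℝ)) (r := 1)).subset
    intro σ hσ
    have hσc : IsChannel σ := hσ
    rw [Metric.mem_closedBall, dist_zero_right]
    rw [pi_norm_le_iff_of_nonneg zero_le_one]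
    intro x
    rw [pi_norm_le_iff_of_nonneg zero_le_one]
    intro s
    rw [Real.norm_eq_abs, abs_le]
    constructor
    · linarith [(hσc x).1 s]
    · calc σ x s ≤ ∑ s', σ x s' :=
            Finset.single_le_sum (fun s' _ => (hσc x).1 s') (mem_univ s)
        _ = 1 := (hσc x).2
  have hKcompact : IsCompact K := Metric.isCompact_of_isClosed_isBounded hKclosed hKbdd
  have hKne : K.Nonempty := by
    refine ⟨fun _ _ => (Fintype.card S : ℝ)⁻¹, fun x => ⟨fun s => by positivity, ?_⟩⟩
    rw [Finset.sum_const, Finset.card_univ, nsmul_eq_mul]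
    have : (Fintype.card S : ℝ) ≠ 0 := Nat.cast_ne_zero.mpr Fintype.card_ne_zero
    field_simp
  -- f is continuous
  have hfc : Continuous f := by
    rw [hf]
    simp only [Fsym]
    apply continuous_finset_sum; intro x₁ _
    apply continuous_finset_sum; intro x₂ _
    apply continuous_finset_sum; intro y _
    apply Continuous.abs
    apply Continuous.sub <;>
    · apply continuous_finset_sum; intro s _
      exact continuous_const.mul ((continuous_apply s).comp (continuous_apply _))
  obtain ⟨σ₀, hσ₀K, hmin⟩ := hKcompact.exists_isMinOn hKne hfc.continuousOn
  have hfnonneg : ∀ σ, 0 ≤ f σ := fun σ =>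
    Finset.sum_nonneg fun _ _ => Finset.sum_nonneg fun _ _ =>
      Finset.sum_nonneg fun _ _ => abs_nonneg _
  have hε₀pos : 0 < f σ₀ := by
    rcases (hfnonneg σ₀).lt_or_eq with h | h
    · exact h
    · exfalso
      apply hns
      refine ⟨σ₀, hσ₀K, fun x₁ x₂ y => ?_⟩
      have h0 : (∑ x₁ : X, ∑ x₂ : X, ∑ y : Y,
          |(∑ s : S, W s x₁ y * σ₀ x₂ s) - ∑ s : S, W s x₂ y * σ₀ x₁ s|) = 0 := h.symm
      have h1 := (Finset.sum_eq_zero_iff_of_nonneg (fun i _ =>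
        Finset.sum_nonneg fun _ _ => Finset.sum_nonneg fun _ _ => abs_nonneg _)).mp h0
        x₁ (mem_univ x₁)
      have h2 := (Finset.sum_eq_zero_iff_of_nonneg (fun i _ =>
        Finset.sum_nonneg fun _ _ => abs_nonneg _)).mp h1 x₂ (mem_univ x₂)
      have h3 := (Finset.sum_eq_zero_iff_of_nonneg (fun i _ => abs_nonneg _)).mp h2
        y (mem_univ y)
      have h4 := abs_eq_zero.mp h3
      linarith
  set ε₀ : ℝ := f σ₀ with hε₀def
  set c : ℝ := 2 * (Fintype.card X : ℝ) ^ 2 with hc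
  have hcnn : (0:ℝ) ≤ c := by positivity
  have hc1 : (0:ℝ) < c + 1 := by positivity
  set εv : ℝ := ε₀ / (c + 1) with hεv
  have hεvpos : 0 < εv := div_pos hε₀pos hc1
  refine ⟨εv, hεvpos, ?_⟩
  intro S' _ _ W' hW' hD hsymm'
  obtain ⟨σ', hσ'chan, hσ'sym⟩ := hsymm'
  -- extract the approximating map φ : S' → S
  have hsup : (⨆ s' : S', ⨅ s : S, dChan (W s) (W' s')) < εv := by
    have := hD
    simp only [Davc] at this
    exact lt_of_le_of_lt (le_max_left _ _) this
  have hphi : ∀ s' : S', ∃ s : S, dChan (W s) (W' s') < εv := by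
    intro s'
    have h1 : (⨅ s : S, dChan (W s) (W' s')) < εv :=
      lt_of_le_of_lt (le_ciSup (f := fun s'' : S' => ⨅ s : S, dChan (W s) (W' s''))
        (Set.Finite.bddAbove (Set.finite_range _)) s') hsup
    obtain ⟨s₀, hs₀⟩ := Finite.exists_min (fun s => dChan (W s) (W' s'))
    exact ⟨s₀, lt_of_le_of_lt (le_ciInf hs₀) h1⟩
  choose φ hφ using hphi
  -- push σ' forward along φ
  set σ : X → S → ℝ := fun x s => ∑ s' : S', if φ s' = s then σ' x s' else 0 with hσdef
  have hσchan : IsChannel σ := by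
    intro x
    constructor
    · intro s
      apply Finset.sum_nonneg
      intro s' _
      split
      · exact (hσ'chan x).1 s'
      · exact le_refl 0
    · rw [hσdef]
      rw [Finset.sum_comm]
      simp only [Finset.sum_ite_eq, Finset.mem_univ, if_true]
      exact (hσ'chan x).2
  have hrw : ∀ x x' y, (∑ s : S, W s x y * σ x' s)
      = ∑ s' : S', W (φ s') x y * σ' x' s' := by
    intro x x' y
    simp only [hσdef]
    simp only [Finset.mul_sum, mul_ite, mul_zero]
    rw [Finset.sum_comm]
    simp [Finset.sum_ite_eq]
  -- the key per-pair estimate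
  have hclaim : ∀ x₁ x₂ : X,
      (∑ y : Y, |∑ s' : S', (W (φ s') x₁ y - W' s' x₁ y) * σ' x₂ s'|) ≤ εv := by
    intro x₁ x₂
    calc (∑ y : Y, |∑ s' : S', (W (φ s') x₁ y - W' s' x₁ y) * σ' x₂ s'|)
        ≤ ∑ y : Y, ∑ s' : S', |W (φ s') x₁ y - W' s' x₁ y| * σ' x₂ s' := by
          apply Finset.sum_le_sum; intro y _
          refine le_trans (Finset.abs_sum_le_sum_abs _ _) (le_of_eq ?_)
          apply Finset.sum_congr rfl; intro s' _
          rw [abs_mul, abs_of_nonneg ((hσ'chan x₂).1 s')]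
      _ = ∑ s' : S', σ' x₂ s' * ∑ y : Y, |W (φ s') x₁ y - W' s' x₁ y| := by
          rw [Finset.sum_comm]
          apply Finset.sum_congr rfl; intro s' _
          rw [Finset.mul_sum]
          apply Finset.sum_congr rfl; intro y _; ring
      _ ≤ ∑ s' : S', σ' x₂ s' * εv := by
          apply Finset.sum_le_sum; intro s' _
          refine mul_le_mul_of_nonneg_left ?_ ((hσ'chan x₂).1 s')
          have h1 : (∑ y : Y, |W (φ s') x₁ y - W' s' x₁ y|) ≤ dChan (W (φ s')) (W' s') := by
            simp only [dChan]
            exact le_ciSup (f := fun x : X => ∑ y : Y, |W (φ s') x y - W' s' x y|)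
              (Set.Finite.bddAbove (Set.finite_range _)) x₁
          exact le_trans h1 (hφ s').le
      _ = εv := by rw [← Finset.sum_mul, (hσ'chan x₂).2, one_mul]
  -- per (x₁,x₂) bound on the y-sum
  have hper : ∀ x₁ x₂ : X,
      (∑ y : Y, |(∑ s : S, W s x₁ y * σ x₂ s) - ∑ s : S, W s x₂ y * σ x₁ s|) ≤ 2 * εv := by
    intro x₁ x₂
    have hy : ∀ y : Y, |(∑ s : S, W s x₁ y * σ x₂ s) - ∑ s : S, W s x₂ y * σ x₁ s|
        ≤ |∑ s' : S', (W (φ s') x₁ y - W' s' x₁ y) * σ' x₂ s'|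
          + |∑ s' : S', (W (φ s') x₂ y - W' s' x₂ y) * σ' x₁ s'| := by
      intro y
      rw [hrw x₁ x₂ y, hrw x₂ x₁ y]
      have hAA : (∑ s' : S', (W (φ s') x₁ y - W' s' x₁ y) * σ' x₂ s')
          = (∑ s' : S', W (φ s') x₁ y * σ' x₂ s') - ∑ s' : S', W' s' x₁ y * σ' x₂ s' := by
        rw [← Finset.sum_sub_distrib]
        apply Finset.sum_congr rfl; intro s' _; ring
      have hBB : (∑ s' : S', (W (φ s') x₂ y - W' s' x₂ y) * σ' x₁ s')
          = (∑ s' : S', W (φ s') x₂ y * σ' x₁ s') - ∑ s' : S', W' s' x₂ y * σ' x₁ s' := by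
        rw [← Finset.sum_sub_distrib]
        apply Finset.sum_congr rfl; intro s' _; ring
      have hsymeq := hσ'sym x₁ x₂ y
      rw [hAA, hBB]
      have heq : (∑ s' : S', W (φ s') x₁ y * σ' x₂ s') - (∑ s' : S', W (φ s') x₂ y * σ' x₁ s')
          = ((∑ s' : S', W (φ s') x₁ y * σ' x₂ s') - ∑ s' : S', W' s' x₁ y * σ' x₂ s')
            - ((∑ s' : S', W (φ s') x₂ y * σ' x₁ s') - ∑ s' : S', W' s' x₂ y * σ' x₁ s') := by
        rw [hsymeq]; ring
      rw [heq]
      exact abs_sub _ _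
    calc (∑ y : Y, |(∑ s : S, W s x₁ y * σ x₂ s) - ∑ s : S, W s x₂ y * σ x₁ s|)
        ≤ ∑ y : Y, (|∑ s' : S', (W (φ s') x₁ y - W' s' x₁ y) * σ' x₂ s'|
            + |∑ s' : S', (W (φ s') x₂ y - W' s' x₂ y) * σ' x₁ s'|) :=
          Finset.sum_le_sum fun y _ => hy y
      _ = (∑ y : Y, |∑ s' : S', (W (φ s') x₁ y - W' s' x₁ y) * σ' x₂ s'|)
            + ∑ y : Y, |∑ s' : S', (W (φ s') x₂ y - W' s' x₂ y) * σ' x₁ s'| :=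
          Finset.sum_add_distrib
      _ ≤ εv + εv := add_le_add (hclaim x₁ x₂) (hclaim x₂ x₁)
      _ = 2 * εv := by ring
  have hbound : f σ ≤ c * εv := by
    have : f σ = ∑ x₁ : X, ∑ x₂ : X, ∑ y : Y,
        |(∑ s : S, W s x₁ y * σ x₂ s) - ∑ s : S, W s x₂ y * σ x₁ s| := rfl
    rw [this]
    calc (∑ x₁ : X, ∑ x₂ : X, ∑ y : Y,
          |(∑ s : S, W s x₁ y * σ x₂ s) - ∑ s : S, W s x₂ y * σ x₁ s|)
        ≤ ∑ _x₁ : X, ∑ _x₂ : X, 2 * εv :=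
          Finset.sum_le_sum fun x₁ _ => Finset.sum_le_sum fun x₂ _ => hper x₁ x₂
      _ = c * εv := by
          simp only [Finset.sum_const, Finset.card_univ, nsmul_eq_mul, hc]
          ring
  have hlow : ε₀ ≤ f σ := (isMinOn_iff.mp hmin) σ hσchan
  have hfin : c * εv < ε₀ := by
    rw [hεv, ← mul_div_assoc, div_lt_iff₀ hc1]
    nlinarith
  linarith
end
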